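/- arXiv:1609.04005 — 4 statements merged into one kernel-verified Lean document; each statement's English description precedes it below -/
import Mathlib

section
/- If X ⊆ 2^ω is S-null for every Silver perfect set S ⊆ 2^ω, then X has the v₀ property: for every Silver perfect set P there exists a Silver perfect set Q with Q ⊆ P ∖ X. -/
open MeasureTheory Set Pointwise

/-- The Cantor space `2^ω`, a compact topological group under coordinatewise
addition mod 2. -/
abbrev CS := ℕ → ZMod 2

/-- The basic clopen set `[w]` determined by a finite binary sequence `w`:
all `x ∈ 2^ω` extending `w`. -/
def cyl (w : List (ZMod 2)) : Set CS := {x | ∀ i, i < w.length → x i = w.getD i 0}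

/-- `w` is a branching node of `P`: both `[w⌢0] ∩ P` and `[w⌢1] ∩ P` are nonempty. -/
def Branch (P : Set CS) (w : List (ZMod 2)) : Prop :=
  (cyl (w ++ [0]) ∩ P).Nonempty ∧ (cyl (w ++ [1]) ∩ P).Nonempty

/-- A perfect subset of Cantor space: nonempty, closed, with no isolated points. -/
def PerfSet (P : Set CS) : Prop := Perfect P ∧ P.Nonempty

/-- `ν` is a canonical measure of the perfect set `P`: a Borel probability measure with
`ν P = 1` and `ν [w⌢0] = ν [w⌢1]` for every branching node `w` of `P`. -/
def IsCanonical (P : Set CS) (ν : Measure CS) : Prop :=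
  IsProbabilityMeasure ν ∧ ν P = 1 ∧
    ∀ w : List (ZMod 2), Branch P w → ν (cyl (w ++ [0])) = ν (cyl (w ++ [1]))

/-- `A` is `P`-null: the `μ_P`-outer measure of `A ∩ P` is `0`
(quantified over all canonical measures of `P`). -/
def PNull (P A : Set CS) : Prop := ∀ ν : Measure CS, IsCanonical P ν → ν (A ∩ P) = 0

/-- `A` is `P`-measurable: `A ∩ P` differs from a Borel set by a `P`-null set,
i.e. it is null-measurable with respect to the canonical measure of `P`. -/
def PMeasurable (P A : Set CS) : Prop :=
  ∀ ν : Measure CS, IsCanonical P ν → NullMeasurableSet (A ∩ P) ν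

/-- `X` is perfectly null: `P`-null for every perfect set `P`. -/
def PerfectlyNull (X : Set CS) : Prop := ∀ P, PerfSet P → PNull P X

/-- `μ` is the fair-coin (Lebesgue product) measure on `2^ω`:
a Borel probability measure with `μ [w] = 2^{-|w|}` for every finite binary sequence. -/
def IsFairCoin (μ : Measure CS) : Prop :=
  IsProbabilityMeasure μ ∧ ∀ w : List (ZMod 2), μ (cyl w) = (2 : ENNReal)⁻¹ ^ w.length

/-- The number of branching nodes of `P` that are proper initial segments of `v`. -/
noncomputable def brCount (P : Set CS) (v : List (ZMod 2)) : ℕ :=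
  Set.ncard {u : List (ZMod 2) | u <+: v ∧ u ≠ v ∧ Branch P u}

/-- A balanced perfect set: branching nodes of strictly smaller level
are strictly shorter. -/
def BalancedPerf (P : Set CS) : Prop :=
  PerfSet P ∧ ∀ v w : List (ZMod 2), Branch P v → Branch P w →
    brCount P v < brCount P w → v.length < w.length

/-- A uniformly perfect set: on each length, either all nodes meeting `P` branch,
or none does. -/
def UniformlyPerf (P : Set CS) : Prop :=
  PerfSet P ∧ ∀ n : ℕ,
    (∀ w : List (ZMod 2), w.length = n → (cyl w ∩ P).Nonempty → Branch P w) ∨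
    (∀ w : List (ZMod 2), w.length = n → ¬ Branch P w)

/-- A Silver perfect set: determined by a partial function `ℕ ⇀ 2`
whose domain has infinite complement. -/
def SilverPerf (P : Set CS) : Prop :=
  ∃ f : ℕ → Option (ZMod 2), {n | f n = none}.Infinite ∧
    P = {x | ∀ n b, f n = some b → x n = b}

/-- A Marczewski null (`s₀`) set. -/
def S0Set (X : Set CS) : Prop :=
  ∀ P, PerfSet P → ∃ Q, PerfSet Q ∧ Q ⊆ P ∧ Q ∩ X = ∅

/-- `S` is a Sierpiński set with respect to the measure `μ`: uncountable, with
countable intersection with every `μ`-null set. -/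
def Sierpinski (μ : Measure CS) (S : Set CS) : Prop :=
  ¬ S.Countable ∧ ∀ N : Set CS, μ N = 0 → (S ∩ N).Countable

/-- The interleaving homeomorphism `h : 2^ω × 2^ω → 2^ω`,
`h(x,y) = ⟨x 0, y 0, x 1, y 1, …⟩`. -/
def interleave (p : CS × CS) : CS := fun n => if n % 2 = 0 then p.1 (n / 2) else p.2 (n / 2)

/-- `X` is universally null: outer measure zero with respect to every finite diffused
Borel measure on `2^ω`. -/
def UniversallyNull (X : Set CS) : Prop :=
  ∀ μ : Measure CS, IsFiniteMeasure μ → (∀ x : CS, μ {x} = 0) → μ X = 0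

/-- `X` is strongly null: for every sequence of positive `ε n` there are sets `A n` of
diameter `< ε n` (with respect to the standard metric `d(x,y) = 2^{-min{n : x n ≠ y n}}`,
expressed combinatorially) covering `X`. -/
def StronglyNull (X : Set CS) : Prop :=
  ∀ ε : ℕ → ℝ, (∀ n, 0 < ε n) → ∃ A : ℕ → Set CS,
    (∀ n, ∃ N : ℕ, (2 : ℝ)⁻¹ ^ N < ε n ∧ ∀ x ∈ A n, ∀ y ∈ A n, ∀ i < N, x i = y i) ∧
    X ⊆ ⋃ n, A n

/-- `X` is perfectly null in the transitive sense: for every perfect `P` there is a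
`G_δ` set `G ⊇ X` with `(G + t) ∩ P` being `P`-null for every `t`. -/
def PNPrime (X : Set CS) : Prop :=
  ∀ P, PerfSet P → ∃ G : Set CS, IsGδ G ∧ X ⊆ G ∧
    ∀ t : CS, PNull P ((fun g => g + t) '' G)


section Stmt10Aux
open Filter Topology ENNReal

noncomputable def mu : Measure CS := Measure.addHaarMeasure ⊤
instance : mu.IsAddLeftInvariant := by unfold mu; infer_instance
instance : IsProbabilityMeasure mu := by
  constructor
  simpa [mu] using Measure.addHaarMeasure_self (K₀ := (⊤ : TopologicalSpace.PositiveCompacts CS))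

lemma mu_flip (e : CS) (s : Set CS) : mu ((· + e) ⁻¹' s) = mu s := by
  have h : (· + e) = (e + · : CS → CS) := by funext x; exact add_comm x e
  rw [h]; exact measure_preimage_add mu e s

def en (n : ℕ) : CS := Pi.single n 1
lemma en_self (n : ℕ) : en n n = 1 := Pi.single_eq_same n 1
lemma en_ne {n m : ℕ} (h : m ≠ n) : en n m = 0 := Pi.single_eq_of_ne h 1
lemma add_en_add_en (x : CS) (n : ℕ) : x + en n + en n = x := by
  funext m
  have h2 : en n m + en n m = 0 := by
    by_cases h : m = n
    · subst h; rw [en_self]; decide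
    · rw [en_ne h]; decide
  show x m + en n m + en n m = x m
  rw [add_assoc, h2, add_zero]

def Pset (f : ℕ → Option (ZMod 2)) : Set CS := {x | ∀ n b, f n = some b → x n = b}

lemma measurableSet_Pset (f : ℕ → Option (ZMod 2)) : MeasurableSet (Pset f) := by
  have h : Pset f = ⋂ n, ⋂ b, ⋂ (_ : f n = some b), (fun x : CS => x n) ⁻¹' {b} := by
    ext x; simp [Pset, Set.mem_iInter]
  rw [h]
  exact .iInter fun n => .iInter fun b => .iInter fun _ =>
    (measurable_pi_apply n) (measurableSet_singleton b)

lemma measurableSet_cyl (w : List (ZMod 2)) : MeasurableSet (cyl w) := by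
  have h : cyl w = ⋂ i, ⋂ (_ : i < w.length), (fun x : CS => x i) ⁻¹' {w.getD i 0} := by
    ext x; simp [cyl, Set.mem_iInter]
  rw [h]
  exact .iInter fun i => .iInter fun _ => (measurable_pi_apply i) (measurableSet_singleton _)

def gf (f : ℕ → Option (ZMod 2)) (x : CS) : CS := fun n => (f n).getD (x n)

lemma measurable_gf (f : ℕ → Option (ZMod 2)) : Measurable (gf f) :=
  measurable_pi_lambda _ fun n =>
    (measurable_of_countable (Option.getD (f n))).comp (measurable_pi_apply n)

noncomputable def nuf (f : ℕ → Option (ZMod 2)) : Measure CS := mu.map (gf f)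

instance (f : ℕ → Option (ZMod 2)) : IsProbabilityMeasure (nuf f) :=
  Measure.isProbabilityMeasure_map (measurable_gf f).aemeasurable

lemma nuf_Pset (f : ℕ → Option (ZMod 2)) : nuf f (Pset f) = 1 := by
  rw [nuf, Measure.map_apply (measurable_gf f) (measurableSet_Pset f)]
  have h : gf f ⁻¹' (Pset f) = Set.univ := by
    ext x
    simp only [Set.mem_preimage, Pset, Set.mem_setOf_eq, Set.mem_univ, iff_true]
    intro n b hb
    simp [gf, hb]
  rw [h]; exact measure_univ

lemma gf_flip (f : ℕ → Option (ZMod 2)) {n : ℕ} (hn : f n = none) (x : CS) :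
    gf f (x + en n) = gf f x + en n := by
  funext m
  by_cases h : m = n
  · subst h
    show (f m).getD (x m + en m m) = (f m).getD (x m) + en m m
    rw [hn]; rfl
  · show (f m).getD (x m + en n m) = (f m).getD (x m) + en n m
    rw [en_ne h, add_zero, add_zero]

lemma nuf_flip (f : ℕ → Option (ZMod 2)) {n : ℕ} (hn : f n = none)
    {s : Set CS} (hs : MeasurableSet s) : nuf f ((· + en n) ⁻¹' s) = nuf f s := by
  rw [nuf, Measure.map_apply (measurable_gf f) hs,
    Measure.map_apply (measurable_gf f) (hs.preimage (measurable_add_const _))]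
  have h : gf f ⁻¹' ((· + en n) ⁻¹' s) = (· + en n) ⁻¹' (gf f ⁻¹' s) := by
    ext x
    simp only [Set.mem_preimage, gf_flip f hn]
  rw [h, mu_flip]

lemma getD_append_self (w : List (ZMod 2)) (c : ZMod 2) : (w ++ [c]).getD w.length 0 = c := by
  simp [List.getD, List.getElem?_append_right]
lemma getD_append_lt (w l : List (ZMod 2)) (i : ℕ) (h : i < w.length) :
    (w ++ l).getD i 0 = w.getD i 0 := by
  simp [List.getD, List.getElem?_append_left h]

lemma branch_none {f : ℕ → Option (ZMod 2)} {w : List (ZMod 2)}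
    (hw : Branch (Pset f) w) : f w.length = none := by
  obtain ⟨⟨z0, hz0c, hz0p⟩, ⟨z1, hz1c, hz1p⟩⟩ := hw
  by_contra h
  obtain ⟨b, hb⟩ := Option.ne_none_iff_exists'.1 h
  have h0 : z0 w.length = 0 := by
    have := hz0c w.length (by simp)
    rwa [getD_append_self] at this
  have h1 : z1 w.length = 1 := by
    have := hz1c w.length (by simp)
    rwa [getD_append_self] at this
  have e0 : (0 : ZMod 2) = b := h0 ▸ hz0p w.length b hb
  have e1 : (1 : ZMod 2) = b := h1 ▸ hz1p w.length b hb
  exact absurd (e0.trans e1.symm) (by decide)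

lemma gf_preimage_cyl (f : ℕ → Option (ZMod 2)) (w : List (ZMod 2)) (c : ZMod 2)
    (hn : f w.length = none) :
    gf f ⁻¹' cyl (w ++ [c]) =
      {x : CS | ∀ i < w.length, (f i).getD (x i) = w.getD i 0} ∩ {x | x w.length = c} := by
  ext x
  simp only [Set.mem_preimage, cyl, Set.mem_setOf_eq, Set.mem_inter_iff,
    List.length_append, List.length_singleton]
  constructor
  · intro h
    refine ⟨fun i hi => ?_, ?_⟩
    · have := h i (by omega)
      rwa [getD_append_lt _ _ _ hi] at this
    · have := h w.length (by omega)
      rw [getD_append_self] at this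
      simpa [gf, hn] using this
  · rintro ⟨h1, h2⟩ i hi
    rcases lt_or_eq_of_le (Nat.lt_succ_iff.1 hi) with hi' | hi'
    · rw [getD_append_lt _ _ _ hi']
      exact h1 i hi'
    · subst hi'
      rw [getD_append_self]
      simpa [gf, hn] using h2

lemma isCanonical_nuf (f : ℕ → Option (ZMod 2)) : IsCanonical (Pset f) (nuf f) := by
  refine ⟨inferInstance, nuf_Pset f, fun w hw => ?_⟩
  have hn : f w.length = none := branch_none hw
  rw [nuf, Measure.map_apply (measurable_gf f) (measurableSet_cyl _),
    Measure.map_apply (measurable_gf f) (measurableSet_cyl _),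
    gf_preimage_cyl f w 0 hn, gf_preimage_cyl f w 1 hn]
  set A : Set CS := {x : CS | ∀ i < w.length, (f i).getD (x i) = w.getD i 0}
  have key : (· + en w.length) ⁻¹' (A ∩ {x | x w.length = 1}) = A ∩ {x | x w.length = 0} := by
    ext x
    simp only [Set.mem_preimage, Set.mem_inter_iff, Set.mem_setOf_eq, A]
    constructor
    · rintro ⟨h1, h2⟩
      refine ⟨fun i hi => ?_, ?_⟩
      · have := h1 i hi
        rwa [show (x + en w.length) i = x i by
          show x i + en w.length i = x i; rw [en_ne (by omega : i ≠ w.length), add_zero]] at this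
      · have h3 : x w.length + 1 = 1 := by
          have := h2
          rwa [show (x + en w.length) w.length = x w.length + 1 by
            show x w.length + en w.length w.length = x w.length + 1; rw [en_self]] at this
        simpa using h3
    · rintro ⟨h1, h2⟩
      refine ⟨fun i hi => ?_, ?_⟩
      · rw [show (x + en w.length) i = x i by
          show x i + en w.length i = x i; rw [en_ne (by omega : i ≠ w.length), add_zero]]
        exact h1 i hi
      · show x w.length + en w.length w.length = 1
        rw [en_self, h2]; decide
  rw [← key, mu_flip]

def rnn (n : ℕ) : CS → (Fin n → ZMod 2) := fun x i => x i
lemma continuous_rnn (n : ℕ) : Continuous (rnn n) :=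
  continuous_pi fun i => continuous_apply (i : ℕ)
def satur (n : ℕ) (K : Set CS) : Set CS := rnn n ⁻¹' (rnn n '' K)
lemma subset_satur (n : ℕ) (K : Set CS) : K ⊆ satur n K := fun x hx => ⟨x, hx, rfl⟩
lemma mem_satur {n : ℕ} {K : Set CS} {x : CS} :
    x ∈ satur n K ↔ ∃ y ∈ K, ∀ i < n, x i = y i := by
  constructor
  · rintro ⟨y, hy, h⟩
    exact ⟨y, hy, fun i hi => (congrFun h.symm ⟨i, hi⟩ : _)⟩
  · rintro ⟨y, hy, h⟩
    exact ⟨y, hy, funext fun i => (h i i.2).symm⟩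
lemma isClosed_satur (n : ℕ) (K : Set CS) : IsClosed (satur n K) :=
  (isClosed_discrete _).preimage (continuous_rnn n)
lemma measurableSet_satur (n : ℕ) (K : Set CS) : MeasurableSet (satur n K) :=
  (isClosed_satur n K).measurableSet
lemma satur_antitone (K : Set CS) {n m : ℕ} (h : n ≤ m) : satur m K ⊆ satur n K := by
  intro x hx
  rcases mem_satur.1 hx with ⟨y, hy, hagree⟩
  exact mem_satur.2 ⟨y, hy, fun i hi => hagree i (lt_of_lt_of_le hi h)⟩
lemma flip_satur {n m : ℕ} (h : n ≤ m) (K : Set CS) :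
    (· + en m) ⁻¹' (satur n K) = satur n K := by
  have key : ∀ x : CS, rnn n (x + en m) = rnn n x := by
    intro x; funext i
    show x i + en m i = x i
    rw [en_ne (by omega : (i:ℕ) ≠ m)]; simp
  ext x
  simp only [satur, Set.mem_preimage, key]

lemma tendsto_agree (y : ℕ → CS) (x : CS) (h : ∀ i, ∃ N, ∀ n ≥ N, y n i = x i) :
    Tendsto y atTop (𝓝 x) := by
  rw [tendsto_pi_nhds]
  intro i
  obtain ⟨N, hN⟩ := h i
  exact tendsto_const_nhds.congr' (eventually_atTop.2 ⟨N, fun n hn => (hN n hn).symm⟩)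

lemma iInter_satur {K : Set CS} (hK : IsClosed K) : ⋂ n, satur n K = K := by
  apply Set.Subset.antisymm
  · intro x hx
    choose y hyK hagree using fun n => mem_satur.1 (Set.mem_iInter.1 hx n)
    have ht : Tendsto y atTop (𝓝 x) :=
      tendsto_agree y x fun i => ⟨i + 1, fun n hn => (hagree n i (by omega)).symm⟩
    exact hK.mem_of_tendsto ht (Eventually.of_forall hyK)
  · exact Set.subset_iInter fun n => subset_satur n K

lemma exists_satur_subset {K U : Set CS} (hKc : IsClosed K) (hU : IsOpen U)
    (hKU : K ⊆ U) : ∃ n, satur n K ⊆ U := by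
  by_contra h
  push_neg at h
  have hne : ∀ n, (satur n K \ U).Nonempty := by
    intro n
    obtain ⟨x, hx1, hx2⟩ := Set.not_subset.1 (h n)
    exact ⟨x, hx1, hx2⟩
  have hsub : ∀ n, satur (n+1) K \ U ⊆ satur n K \ U :=
    fun n => Set.diff_subset_diff_left (satur_antitone K (Nat.le_succ n))
  have hclosed : ∀ n, IsClosed (satur n K \ U) := fun n => (isClosed_satur n K).sdiff hU
  have hcpt : IsCompact (satur 0 K \ U) := (hclosed 0).isCompact
  obtain ⟨x, hx⟩ := IsCompact.nonempty_iInter_of_sequence_nonempty_isCompact_isClosed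
    _ hsub hne hcpt hclosed
  have hx1 : x ∈ K := by
    rw [← iInter_satur hKc]
    exact Set.mem_iInter.2 fun n => (Set.mem_iInter.1 hx n).1
  exact (Set.mem_iInter.1 hx 0).2 (hKU hx1)

lemma step_lemma (f : ℕ → Option (ZMod 2)) (hf : {n | f n = none}.Infinite)
    {D : Set CS} (hD : IsClosed D) (N : ℕ) {ε : ℝ≥0∞} (hε : 0 < ε) :
    ∃ n, N ≤ n ∧ f n = none ∧
      nuf f D ≤ nuf f (D ∩ (· + en n) ⁻¹' D) + ε := by
  set ν := nuf f with hν
  have hfin : ν D ≠ ⊤ := measure_ne_top ν D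
  have hε2 : (0:ℝ≥0∞) < ε / 2 := ENNReal.half_pos hε.ne'
  obtain ⟨U, hDU, hUopen, hUlt⟩ := Set.exists_isOpen_lt_of_lt D (ν D + ε/2)
    (ENNReal.lt_add_right hfin hε2.ne')
  obtain ⟨n₀, hsat⟩ := exists_satur_subset hD hUopen hDU
  obtain ⟨n, hn_none, hn_gt⟩ := hf.exists_gt (max N n₀)
  have hn_none' : f n = none := hn_none
  have hNn : N ≤ n := le_of_lt (lt_of_le_of_lt (le_max_left _ _) hn_gt)
  have hn₀n : n₀ ≤ n := le_of_lt (lt_of_le_of_lt (le_max_right _ _) hn_gt)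
  refine ⟨n, hNn, hn_none', ?_⟩
  set E := satur n₀ D with hE
  have hDE : D ⊆ E := subset_satur n₀ D
  have hEU : E ⊆ U := hsat
  have hEflip : (· + en n) ⁻¹' E = E := flip_satur hn₀n D
  have hUD : ν (U \ D) < ε / 2 :=
    measure_diff_lt_of_lt_add hD.measurableSet.nullMeasurableSet hDU hfin hUlt
  have hED : ν (E \ D) ≤ ν (U \ D) :=
    measure_mono (Set.diff_subset_diff_left hEU)
  have hpre : E \ ((· + en n) ⁻¹' D) = (· + en n) ⁻¹' (E \ D) := by
    rw [Set.preimage_diff, hEflip]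
  have hflipmeas : ν ((· + en n) ⁻¹' (E \ D)) = ν (E \ D) :=
    nuf_flip f hn_none' ((measurableSet_satur n₀ D).diff hD.measurableSet)
  have hcover : D ⊆ (D ∩ (· + en n) ⁻¹' D) ∪ (E \ ((· + en n) ⁻¹' D)) := by
    intro x hx
    by_cases hx2 : x ∈ (· + en n) ⁻¹' D
    · exact Or.inl ⟨hx, hx2⟩
    · exact Or.inr ⟨hDE hx, hx2⟩
  calc ν D ≤ ν ((D ∩ (· + en n) ⁻¹' D) ∪ (E \ ((· + en n) ⁻¹' D))) := measure_mono hcover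
    _ ≤ ν (D ∩ (· + en n) ⁻¹' D) + ν (E \ ((· + en n) ⁻¹' D)) := measure_union_le _ _
    _ = ν (D ∩ (· + en n) ⁻¹' D) + ν (E \ D) := by rw [hpre, hflipmeas]
    _ ≤ ν (D ∩ (· + en n) ⁻¹' D) + ε / 2 := add_le_add le_rfl (le_trans hED hUD.le)
    _ ≤ ν (D ∩ (· + en n) ⁻¹' D) + ε := add_le_add le_rfl ENNReal.half_le_self

lemma half_split (x : ℝ≥0∞) (k : ℕ) : x / 2^(k+1) = x / 2^(k+2) + x / 2^(k+2) := by
  rw [ENNReal.div_add_div_same, ← two_mul,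
    show (2:ℝ≥0∞)^(k+2) = 2 * 2^(k+1) from pow_succ' 2 (k+1),
    ENNReal.mul_div_mul_left _ _ two_ne_zero ENNReal.ofNat_ne_top]

lemma zmod2_ne {a b : ZMod 2} (h : a ≠ b) : a = b + 1 := by
  revert h; revert a b; decide

lemma silver_sub (f : ℕ → Option (ZMod 2)) (hf : {n | f n = none}.Infinite)
    {K : Set CS} (hKc : IsClosed K) (hKpos : 0 < nuf f K) :
    ∃ (x₀ : CS) (nn : ℕ → ℕ), StrictMono nn ∧
      {y : CS | ∀ m, (∀ k, nn k ≠ m) → y m = x₀ m} ⊆ K := by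
  classical
  set ν := nuf f with hν
  have hstep : ∀ (D : Set CS) (N k : ℕ), ∃ n, N ≤ n ∧
      (IsClosed D → ν D ≤ ν (D ∩ (· + en n) ⁻¹' D) + ν K / 2^(k+2)) := by
    intro D N k
    by_cases h : IsClosed D
    · have hpos : (0:ℝ≥0∞) < ν K / 2^(k+2) :=
        ENNReal.div_pos hKpos.ne' (by simp)
      obtain ⟨n, h1, _, h2⟩ := step_lemma f hf h N hpos
      exact ⟨n, h1, fun _ => h2⟩
    · exact ⟨N, le_rfl, fun hc => absurd hc h⟩
  choose pick hpick1 hpick2 using hstep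
  obtain ⟨DS, hDS0, hDSsucc⟩ : ∃ DS : ℕ → Set CS × ℕ, DS 0 = (K, 0) ∧
      ∀ k, DS (k+1) = ((DS k).1 ∩ (· + en (pick (DS k).1 (DS k).2 k)) ⁻¹' (DS k).1,
        pick (DS k).1 (DS k).2 k + 1) :=
    ⟨fun k => Nat.rec (K, 0)
      (fun k p => (p.1 ∩ (· + en (pick p.1 p.2 k)) ⁻¹' p.1, pick p.1 p.2 k + 1)) k,
      rfl, fun k => rfl⟩
  set D : ℕ → Set CS := fun k => (DS k).1 with hD
  set nn : ℕ → ℕ := fun k => pick (DS k).1 (DS k).2 k with hnn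
  have hD0 : D 0 = K := congrArg Prod.fst hDS0
  have hDsucc : ∀ k, D (k+1) = D k ∩ (· + en (nn k)) ⁻¹' (D k) :=
    fun k => congrArg Prod.fst (hDSsucc k)
  have hN2 : ∀ k, (DS (k+1)).2 = nn k + 1 := fun k => congrArg Prod.snd (hDSsucc k)
  have hclosed : ∀ k, IsClosed (D k) := by
    intro k; induction k with
    | zero => rw [hD0]; exact hKc
    | succ k ih =>
      rw [hDsucc]
      exact ih.inter (ih.preimage (continuous_add_right _))
  have hanti : Antitone D := antitone_nat_of_succ_le fun k => by
    rw [hDsucc]; exact Set.inter_subset_left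
  have hstrict : StrictMono nn := by
    apply strictMono_nat_of_lt_succ
    intro k
    have h1 : (DS (k+1)).2 ≤ nn (k+1) := hpick1 _ _ _
    rw [hN2 k] at h1
    omega
  have hmeas : ∀ k, ν K / 2 + ν K / 2^(k+1) ≤ ν (D k) := by
    intro k; induction k with
    | zero => rw [hD0, pow_one, ENNReal.add_halves]
    | succ k ih =>
      have h2 := hpick2 (DS k).1 (DS k).2 k (hclosed k)
      rw [← hDsucc k] at h2
      have hfin : ν K / 2^(k+2) ≠ ⊤ :=
        (ENNReal.div_lt_top (measure_ne_top ν K) (by simp)).ne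
      have hcalc : ν K / 2 + ν K / 2^(k+2) + ν K / 2^(k+2) ≤ ν (D (k+1)) + ν K / 2^(k+2) := by
        calc ν K / 2 + ν K / 2^(k+2) + ν K / 2^(k+2)
            = ν K / 2 + ν K / 2^(k+1) := by rw [add_assoc, ← half_split]
          _ ≤ ν (D k) := ih
          _ ≤ ν (D (k+1)) + ν K / 2^(k+2) := h2
      exact (ENNReal.add_le_add_iff_right hfin).1 hcalc
  set Dinf := ⋂ k, D k with hDinf
  have hDinfclosed : IsClosed Dinf := isClosed_iInter fun k => hclosed k
  have htend : Tendsto (fun k => ν (D k)) atTop (𝓝 (ν Dinf)) :=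
    tendsto_measure_iInter_atTop (fun k => (hclosed k).measurableSet.nullMeasurableSet) hanti
      ⟨0, measure_ne_top ν (D 0)⟩
  have hDinfpos : 0 < ν Dinf := by
    have hge : ν K / 2 ≤ ν Dinf :=
      ge_of_tendsto' htend fun k => le_trans le_self_add (hmeas k)
    exact lt_of_lt_of_le (ENNReal.div_pos hKpos.ne' ENNReal.ofNat_ne_top) hge
  obtain ⟨x₀, hx₀⟩ : Dinf.Nonempty := by
    rw [Set.nonempty_iff_ne_empty]
    intro h
    rw [h, measure_empty] at hDinfpos
    exact lt_irrefl _ hDinfpos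
  have hinv : ∀ k m, k < m → ∀ x ∈ D m, x + en (nn k) ∈ D m := by
    intro k m
    induction m with
    | zero => omega
    | succ m ih =>
      intro hkm x hx
      rw [hDsucc] at hx ⊢
      obtain ⟨hx1, hx2⟩ := hx
      rcases Nat.lt_succ_iff_lt_or_eq.1 hkm with h | h
      · refine ⟨ih h x hx1, ?_⟩
        show x + en (nn k) + en (nn m) ∈ D m
        rw [add_right_comm]
        exact ih h _ hx2
      · subst h
        refine ⟨hx2, ?_⟩
        show x + en (nn k) + en (nn k) ∈ D k
        rw [add_en_add_en]
        exact hx1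
  have hflip : ∀ k x, x ∈ Dinf → x + en (nn k) ∈ Dinf := by
    intro k x hx
    refine Set.mem_iInter.2 fun m => ?_
    rcases lt_or_ge k m with h | h
    · exact hinv k m h x (Set.mem_iInter.1 hx m)
    · exact hanti (by omega : m ≤ k + 1)
        (hinv k (k+1) (Nat.lt_succ_self k) x (Set.mem_iInter.1 hx (k+1)))
  refine ⟨x₀, nn, hstrict, ?_⟩
  intro y hy
  set z : ℕ → CS := fun j m => if ∃ k < j, nn k = m then y m else x₀ m with hz
  have hz0 : z 0 = x₀ := by
    funext m; simp [hz]
  have hzstep : ∀ j, z j ∈ Dinf → z (j+1) ∈ Dinf := by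
    intro j hj
    by_cases hcase : y (nn j) = x₀ (nn j)
    · have : z (j+1) = z j := by
        funext m
        simp only [hz]
        by_cases hm : nn j = m
        · subst hm
          by_cases h' : ∃ k < j, nn k = nn j
          · rw [if_pos h', if_pos (show ∃ k < j+1, nn k = nn j from
              ⟨h'.choose, by have := h'.choose_spec.1; omega, h'.choose_spec.2⟩)]
          · simp [h', show ∃ k < j+1, nn k = nn j from ⟨j, by omega, rfl⟩, hcase]
        · have : (∃ k < j+1, nn k = m) ↔ (∃ k < j, nn k = m) := by
            constructor
            · rintro ⟨k, hk, hkm⟩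
              rcases Nat.lt_succ_iff_lt_or_eq.1 hk with h' | h'
              · exact ⟨k, h', hkm⟩
              · subst h'; exact absurd hkm hm
            · rintro ⟨k, hk, hkm⟩; exact ⟨k, by omega, hkm⟩
          simp only [this]
      rw [this]; exact hj
    · have : z (j+1) = z j + en (nn j) := by
        funext m
        show z (j+1) m = z j m + en (nn j) m
        by_cases hm : nn j = m
        · subst hm
          have hnotm : ¬ ∃ k < j, nn k = nn j := by
            rintro ⟨k, hk, hkm⟩
            exact absurd (hstrict.injective hkm) (by omega)
          simp only [hz, hnotm, if_false, show ∃ k < j+1, nn k = nn j from ⟨j, by omega, rfl⟩,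
            if_true, en_self]
          exact zmod2_ne hcase
        · have hiff : (∃ k < j+1, nn k = m) ↔ (∃ k < j, nn k = m) := by
            constructor
            · rintro ⟨k, hk, hkm⟩
              rcases Nat.lt_succ_iff_lt_or_eq.1 hk with h' | h'
              · exact ⟨k, h', hkm⟩
              · subst h'; exact absurd hkm hm
            · rintro ⟨k, hk, hkm⟩; exact ⟨k, by omega, hkm⟩
          simp only [hz, hiff, en_ne (fun h => hm h.symm), add_zero]
      rw [this]
      exact hflip j _ hj
  have hzin : ∀ j, z j ∈ Dinf := by
    intro j; induction j with
    | zero => rw [hz0]; exact hx₀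
    | succ j ih => exact hzstep j ih
  have hlim : Tendsto z atTop (𝓝 y) := by
    apply tendsto_agree
    intro m
    by_cases hm : ∃ k, nn k = m
    · obtain ⟨k₀, hk₀⟩ := hm
      refine ⟨k₀ + 1, fun j hj => ?_⟩
      simp only [hz]
      rw [if_pos ⟨k₀, by omega, hk₀⟩]
    · push_neg at hm
      refine ⟨0, fun j _ => ?_⟩
      have h1 : ¬ ∃ k < j, nn k = m := by
        rintro ⟨k, _, hkm⟩; exact hm k hkm
      simp only [hz]
      rw [if_neg h1]
      exact (hy m hm).symm
  have hyDinf : y ∈ Dinf :=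
    hDinfclosed.mem_of_tendsto hlim (Eventually.of_forall hzin)
  have : Dinf ⊆ K := by
    rw [← hD0]
    exact Set.iInter_subset D 0
  exact this hyDinf

end Stmt10Aux

/-- If `X` is `S`-null for every Silver perfect set `S`, then `X` has the
`v₀` property: inside every Silver perfect `P` there is a Silver perfect `Q ⊆ P \ X`. -/
theorem stmt_10 (X : Set CS) (hX : ∀ S, SilverPerf S → PNull S X) :
    ∀ P, SilverPerf P → ∃ Q, SilverPerf Q ∧ Q ⊆ P \ X := by
  intro P hP
  obtain ⟨f, hfinf, rfl⟩ := hP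
  classical
  set ν := nuf f with hν
  have hcan := isCanonical_nuf f
  have hnull : ν (X ∩ Pset f) = 0 := hX _ ⟨f, hfinf, rfl⟩ ν hcan
  obtain ⟨B, hBsub, hBmeas, hB0⟩ := exists_measurable_superset_of_null hnull
  have hPB : ν (Pset f \ B) = 1 := by
    rw [measure_diff_null hB0]
    exact hcan.2.1
  obtain ⟨K, hKsub, hKcomp, hKgt⟩ :=
    MeasurableSet.exists_isCompact_lt_add (μ := ν)
      ((measurableSet_Pset f).diff hBmeas) (measure_ne_top ν _)
      (ε := 2⁻¹) (by norm_num)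
  rw [hPB] at hKgt
  have hKpos : 0 < ν K := by
    rcases eq_or_lt_of_le (show 0 ≤ ν K from zero_le) with h | h
    · rw [← h, zero_add] at hKgt
      exact absurd hKgt (by norm_num)
    · exact h
  obtain ⟨x₀, nn, hmono, hsub⟩ := silver_sub f hfinf hKcomp.isClosed hKpos
  refine ⟨{y : CS | ∀ m, (∀ k, nn k ≠ m) → y m = x₀ m}, ?_, ?_⟩
  · refine ⟨fun m => if ∃ k, nn k = m then none else some (x₀ m), ?_, ?_⟩
    · have h : {m | (if ∃ k, nn k = m then none else some (x₀ m)) = none} = Set.range nn := by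
        ext m
        by_cases h : ∃ k, nn k = m <;> simp [h, Set.mem_range]
      rw [h]
      exact Set.infinite_range_of_injective hmono.injective
    · ext y
      simp only [Set.mem_setOf_eq]
      constructor
      · intro h m b hb
        by_cases hm : ∃ k, nn k = m
        · rw [if_pos hm] at hb; exact absurd hb (by simp)
        · rw [if_neg hm] at hb
          push_neg at hm
          rw [h m hm]
          exact Option.some_injective _ hb
      · intro h m hm
        have : ¬ ∃ k, nn k = m := by rintro ⟨k, hk⟩; exact hm k hk
        exact h m (x₀ m) (by rw [if_neg this])
  · intro y hy
    have hyK : y ∈ K := hsub hy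
    have hyPB : y ∈ Pset f \ B := hKsub hyK
    exact ⟨hyPB.1, fun hyX => hyPB.2 (hBsub ⟨hyX, hyPB.1⟩)⟩
end

section
/- The algebraic sum of a Sierpiński set and a perfectly null set is an s₀-set: if S ⊆ 2^ω is a Sierpiński set and X ⊆ 2^ω is perfectly null, then S + X is an s₀-set. -/
open MeasureTheory Set Pointwise

namespace Work
open scoped ENNReal


def pre (x : CS) (n : ℕ) : List (ZMod 2) := List.ofFn (fun i : Fin n => x i)

@[simp] lemma pre_length (x : CS) (n : ℕ) : (pre x n).length = n := by simp [pre]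

lemma pre_getD (x : CS) {i n : ℕ} (h : i < n) : (pre x n).getD i 0 = x i := by
  rw [List.getD_eq_getElem _ _ (by simpa [pre] using h)]
  simp [pre]

lemma getD_of_prefix {u w : List (ZMod 2)} (h : u <+: w) {i : ℕ} (hi : i < u.length) :
    u.getD i 0 = w.getD i 0 := by
  rw [List.getD_eq_getElem _ _ hi, List.getD_eq_getElem _ _ (lt_of_lt_of_le hi h.length_le)]
  exact h.getElem hi

lemma pre_succ (x : CS) (n : ℕ) : pre x (n + 1) = pre x n ++ [x n] := by
  rw [pre, List.ofFn_succ', List.concat_eq_append]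
  congr 1

lemma pre_prefix (x : CS) {n m : ℕ} (h : n ≤ m) : pre x n <+: pre x m := by
  induction m with
  | zero => simpa using (Nat.le_zero.mp h) ▸ List.prefix_refl _
  | succ m ih =>
    rcases Nat.lt_or_ge n (m+1) with h' | h'
    · exact (ih (Nat.lt_succ_iff.mp h')).trans (by rw [pre_succ]; exact List.prefix_append _ _)
    · have : n = m + 1 := le_antisymm h h'
      subst this; exact List.prefix_refl _

lemma mem_cyl {x : CS} {w : List (ZMod 2)} : x ∈ cyl w ↔ ∀ i, i < w.length → x i = w.getD i 0 :=
  Iff.rfl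

lemma mem_cyl_pre {x y : CS} {n : ℕ} : x ∈ cyl (pre y n) ↔ ∀ i, i < n → x i = y i := by
  constructor
  · intro h i hi
    have := h i (by simpa using hi)
    rwa [pre_getD y hi] at this
  · intro h i hi
    rw [pre_getD y (by simpa using hi)]
    exact h i (by simpa using hi)

lemma self_mem_cyl_pre (x : CS) (n : ℕ) : x ∈ cyl (pre x n) :=
  mem_cyl_pre.mpr fun _ _ => rfl

lemma mem_cyl_iff_pre {x : CS} {w : List (ZMod 2)} : x ∈ cyl w ↔ pre x w.length = w := by
  constructor
  · intro h
    apply List.ext_getElem (by simp)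
    intro i h1 h2
    have h3 := h i (by simpa using h2)
    rw [List.getD_eq_getElem _ _ h2] at h3
    simpa [pre] using h3
  · intro h i hi
    conv_rhs => rw [← h]
    exact (pre_getD x hi).symm

lemma cyl_anti {u w : List (ZMod 2)} (h : u <+: w) : cyl w ⊆ cyl u := by
  intro x hx i hi
  rw [hx i (lt_of_lt_of_le hi h.length_le), getD_of_prefix h hi]

lemma cyl_nonempty (w : List (ZMod 2)) : (cyl w).Nonempty :=
  ⟨fun i => w.getD i 0, fun _ _ => rfl⟩

@[simp] lemma cyl_nil : cyl ([] : List (ZMod 2)) = univ := by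
  ext x; simp [cyl]

lemma cyl_eq_iInter (w : List (ZMod 2)) :
    cyl w = ⋂ i : Fin w.length, (fun x : CS => x i) ⁻¹' {w.getD i 0} := by
  ext x
  simp only [Set.mem_iInter, Set.mem_preimage, Set.mem_singleton_iff]
  exact ⟨fun h i => h i i.2, fun h i hi => h ⟨i, hi⟩⟩

lemma isOpen_cyl (w : List (ZMod 2)) : IsOpen (cyl w) := by
  rw [cyl_eq_iInter]
  exact isOpen_iInter_of_finite fun i =>
    (continuous_apply (i : ℕ)).isOpen_preimage _ (isOpen_discrete _)

lemma isClosed_cyl (w : List (ZMod 2)) : IsClosed (cyl w) := by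
  rw [cyl_eq_iInter]
  exact isClosed_iInter fun i =>
    IsClosed.preimage (continuous_apply (i : ℕ)) (isClosed_discrete _)

lemma measurableSet_cyl (w : List (ZMod 2)) : MeasurableSet (cyl w) :=
  (isClosed_cyl w).measurableSet

lemma exists_cyl_pre_subset {x : CS} {U : Set CS} (hU : IsOpen U) (hx : x ∈ U) :
    ∃ n, cyl (pre x n) ⊆ U := by
  obtain ⟨I, u, hIu, hsub⟩ := isOpen_pi_iff.mp hU x hx
  refine ⟨(I.sup id) + 1, fun y hy => hsub ?_⟩
  intro a ha
  have h1 : a < I.sup id + 1 := Nat.lt_succ_of_le (Finset.le_sup (f := id) ha)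
  rw [mem_cyl_pre.mp hy a h1]
  exact (hIu a ha).2

lemma comparable_of_mem {u w : List (ZMod 2)} {x : CS} (hu : x ∈ cyl u) (hw : x ∈ cyl w) :
    u <+: w ∨ w <+: u := by
  rcases le_total u.length w.length with h | h
  · left
    rw [← mem_cyl_iff_pre.mp hu, ← mem_cyl_iff_pre.mp hw]
    exact pre_prefix x h
  · right
    rw [← mem_cyl_iff_pre.mp hu, ← mem_cyl_iff_pre.mp hw]
    exact pre_prefix x h

lemma eq_of_mem_of_length {u w : List (ZMod 2)} {x : CS} (hu : x ∈ cyl u) (hw : x ∈ cyl w)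
    (h : u.length = w.length) : u = w := by
  rw [← mem_cyl_iff_pre.mp hu, ← mem_cyl_iff_pre.mp hw, h]

lemma zmod2_cases (a b c : ZMod 2) (h : a ≠ b) : c = a ∨ c = b := by revert a b c; decide

lemma add_eq_iff_zmod2 {a s c : ZMod 2} : a + s = c ↔ a = c + s := by
  constructor <;> intro h <;> subst h <;> simp [add_assoc, CharTwo.add_self_eq_zero]


-- extra sec1 lemmas
lemma pre_zero (x : CS) : pre x 0 = [] := by simp [pre]

lemma pre_dropLast (x : CS) (n : ℕ) : (pre x (n+1)).dropLast = pre x n := by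
  rw [pre_succ]; simp

lemma pre_congr {x y : CS} {n : ℕ} (h : ∀ i < n, x i = y i) : pre x n = pre y n := by
  unfold pre; congr 1; funext i; exact h i i.2

lemma getD_append_self (v : List (ZMod 2)) (c : ZMod 2) : (v ++ [c]).getD v.length 0 = c := by
  rw [List.getD_eq_getElem _ _ (by simp)]
  exact List.getElem_concat_length rfl _

lemma coord_append {x : CS} {u : List (ZMod 2)} {c : ZMod 2} (h : x ∈ cyl (u ++ [c])) :
    x u.length = c := by
  have := h u.length (by simp)
  rwa [getD_append_self] at this

lemma exists_first_diff {x y : CS} (h : x ≠ y) : ∃ n, x n ≠ y n ∧ ∀ i < n, x i = y i := by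
  have hx : ∃ n, x n ≠ y n := by
    by_contra h'; push_neg at h'; exact h (funext h')
  exact ⟨Nat.find hx, Nat.find_spec hx, fun i hi => of_not_not (Nat.find_min hx hi)⟩


lemma singleton_null {μ : Measure CS} (hμ : IsFairCoin μ) (x : CS) : μ {x} = 0 := by
  by_contra h
  obtain ⟨n, hn⟩ := ENNReal.exists_inv_two_pow_lt h
  have h1 : μ {x} ≤ μ (cyl (pre x n)) :=
    measure_mono (show {x} ⊆ cyl (pre x n) from fun y hy => by
      rw [Set.mem_singleton_iff] at hy; subst hy; exact self_mem_cyl_pre y n)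
  rw [hμ.2, pre_length] at h1
  exact absurd (h1.trans_lt hn) (lt_irrefl _)

lemma cover_of_null {μ : Measure CS} (hμ : IsFairCoin μ) {Z : Set CS} (hZ : μ Z = 0)
    {ε : ℝ≥0∞} (hε : ε ≠ 0) :
    ∃ C : ℕ → List (ZMod 2), Z ⊆ ⋃ n, cyl (C n) ∧
      ∑' n, (2 : ℝ≥0∞)⁻¹ ^ (C n).length ≤ ε := by
  haveI := hμ.1
  have hε2 : (0:ℝ≥0∞) < ε / 2 := ENNReal.div_pos hε (by norm_num)
  obtain ⟨L, hL⟩ := ENNReal.exists_inv_two_pow_lt (ne_of_gt hε2)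
  obtain ⟨U, hZU, hUopen, hUμ⟩ := Z.exists_isOpen_lt_of_lt (ε/2) (hZ ▸ hε2)
  set g : List (ZMod 2) → ℝ≥0∞ := fun w => (2 : ℝ≥0∞)⁻¹ ^ w.length with hg
  set M : Set (List (ZMod 2)) := {w | cyl w ⊆ U ∧ (w = [] ∨ ¬ cyl (w.dropLast) ⊆ U)} with hM
  have hMcov : U ⊆ ⋃ w ∈ M, cyl w := by
    intro x hx
    obtain ⟨n, hn⟩ := exists_cyl_pre_subset hUopen hx
    have hex : ∃ m, cyl (pre x m) ⊆ U := ⟨n, hn⟩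
    classical
    let m₀ := Nat.find hex
    refine Set.mem_biUnion (show pre x m₀ ∈ M from ?_) (self_mem_cyl_pre x m₀)
    refine ⟨Nat.find_spec hex, ?_⟩
    rcases Nat.eq_zero_or_pos m₀ with h0 | h0
    · left; rw [show m₀ = 0 from h0]; exact pre_zero x
    · right
      obtain ⟨m₁, hm₁⟩ : ∃ m₁, m₀ = m₁ + 1 := ⟨m₀ - 1, by omega⟩
      rw [hm₁, pre_dropLast]
      exact Nat.find_min hex (by omega)
  have hMdisj : M.PairwiseDisjoint cyl := by
    intro u hu w hw huw
    rw [Function.onFun, Set.disjoint_left]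
    intro x hxu hxw
    have hcomp := comparable_of_mem hxu hxw
    -- wlog via cases
    have key : ∀ u w : List (ZMod 2), u ∈ M → w ∈ M → u ≠ w → u <+: w → False := by
      intro u w hu hw huw hpre
      have hlt : u.length < w.length := by
        rcases lt_or_eq_of_le hpre.length_le with h | h
        · exact h
        · exact absurd (hpre.eq_of_length h) huw
      have hwne : w ≠ [] := by intro h; rw [h] at hlt; simp at hlt
      have hdl : u <+: w.dropLast := by
        rw [List.dropLast_eq_take]
        rw [List.prefix_take_iff]
        exact ⟨hpre, by omega⟩
      have : cyl w.dropLast ⊆ U := (cyl_anti hdl).trans hu.1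
      rcases hw.2 with h | h
      · exact hwne h
      · exact h this
    rcases hcomp with h | h
    · exact key u w hu hw huw h
    · exact key w u hw hu (Ne.symm huw) h
  have hMc : M.Countable := Set.to_countable M
  have hMsum : ∑' (w : M), g w ≤ μ U := by
    have : ∀ w : M, g w = μ (cyl w) := fun w => by rw [hμ.2]
    rw [tsum_congr this, ← measure_biUnion hMc hMdisj (fun w _ => measurableSet_cyl w)]
    exact measure_mono (Set.iUnion₂_subset fun w hw => hw.1)
  -- pad with dummies
  set D : ℕ → List (ZMod 2) := fun n => List.replicate (L + n + 1) 0 with hD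
  have hDinj : Function.Injective D := by
    intro a b h
    have := congrArg List.length h
    simpa [hD] using this
  have hDsum : ∑' (w : Set.range D), g w = (2:ℝ≥0∞)⁻¹ ^ L := by
    rw [← Equiv.tsum_eq (Equiv.ofInjective D hDinj) (fun w : Set.range D => g w)]
    have : ∀ n, g (D n) = (2:ℝ≥0∞)⁻¹ ^ (L + n + 1) := fun n => by simp [hg, hD]
    calc ∑' n, g ((Equiv.ofInjective D hDinj) n) = ∑' n, (2:ℝ≥0∞)⁻¹ ^ (L + n + 1) := by
          exact tsum_congr fun n => this n
      _ = (2:ℝ≥0∞)⁻¹ ^ L := by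
          have : ∀ n, (2:ℝ≥0∞)⁻¹ ^ (L + n + 1) = (2:ℝ≥0∞)⁻¹ ^ (L+1) * (2:ℝ≥0∞)⁻¹ ^ n := by
            intro n; rw [← pow_add]; ring_nf
          rw [tsum_congr this, ENNReal.tsum_mul_left, ENNReal.tsum_geometric,
            ENNReal.one_sub_inv_two, pow_succ]
          rw [mul_assoc, ENNReal.mul_inv_cancel (by simp) (ENNReal.inv_ne_top.mpr (by norm_num)), mul_one]
  set M' : Set (List (ZMod 2)) := M ∪ Set.range D with hM'
  have hM'c : M'.Countable := Set.to_countable M'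
  have hM'inf : M'.Infinite := Set.Infinite.mono Set.subset_union_right
    (Set.infinite_range_of_injective hDinj)
  obtain ⟨den⟩ := Set.countable_infinite_iff_nonempty_denumerable.mp ⟨hM'c, hM'inf⟩
  haveI := den
  let eqv : ℕ ≃ M' := (Denumerable.eqv M').symm
  refine ⟨fun n => (eqv n : List (ZMod 2)), ?_, ?_⟩
  · intro x hx
    obtain ⟨w, hwM, hxw⟩ := Set.mem_iUnion₂.mp (hMcov (hZU hx))
    have : w ∈ M' := Set.mem_union_left _ hwM
    exact Set.mem_iUnion.mpr ⟨eqv.symm ⟨w, this⟩, by simpa using hxw⟩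
  · have : ∑' n, g (eqv n : List (ZMod 2)) = ∑' (w : M'), g w :=
      Equiv.tsum_eq eqv (fun w : M' => g w)
    rw [show (fun n => (2:ℝ≥0∞)⁻¹ ^ ((eqv n : List (ZMod 2))).length) = fun n => g (eqv n : List (ZMod 2)) from rfl, this]
    calc ∑' (w : M'), g w ≤ ∑' (w : M), g w + ∑' (w : Set.range D), g w :=
          ENNReal.tsum_union_le g M (Set.range D)
      _ ≤ ε / 2 + ε / 2 := add_le_add (hMsum.trans hUμ.le) (by rw [hDsum]; exact hL.le)
      _ = ε := ENNReal.add_halves ε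

/-! ### The fusion construction inside a perfect set -/

section Construction

variable (P : Set CS) (A : ℕ → ℕ)

def T (w : List (ZMod 2)) : Prop := (cyl w ∩ P).Nonempty

lemma exists_extend {w : List (ZMod 2)} (h : T P w) (L : ℕ) :
    ∃ w', w <+: w' ∧ L ≤ w'.length ∧ T P w' := by
  obtain ⟨x, hxc, hxP⟩ := h
  refine ⟨pre x (max L w.length), ?_, by simp, ⟨x, self_mem_cyl_pre _ _, hxP⟩⟩
  have hpw : pre x w.length = w := mem_cyl_iff_pre.mp hxc
  conv_lhs => rw [← hpw]
  exact pre_prefix x (le_max_right _ _)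

attribute [local instance] Classical.propDecidable

lemma exists_branch (hP : Perfect P) {w : List (ZMod 2)} (h : T P w) :
    ∃ v, w <+: v ∧ T P (v ++ [0]) ∧ T P (v ++ [1]) := by
  obtain ⟨x, hxc, hxP⟩ := h
  have hacc := hP.acc x hxP
  rw [accPt_iff_nhds] at hacc
  obtain ⟨y, ⟨hyc, hyP⟩, hyx⟩ := hacc (cyl w) ((isOpen_cyl w).mem_nhds hxc)
  obtain ⟨n₀, hn₀, hbelow⟩ := exists_first_diff (show x ≠ y from fun hh => hyx hh.symm)
  have hw : w.length ≤ n₀ := by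
    by_contra h'
    push_neg at h'
    exact hn₀ (by rw [hxc n₀ h', hyc n₀ h'])
  have hxy : pre x n₀ = pre y n₀ := pre_congr hbelow
  have hx1 : x ∈ cyl (pre x n₀ ++ [x n₀]) := by rw [← pre_succ]; exact self_mem_cyl_pre _ _
  have hy1 : y ∈ cyl (pre x n₀ ++ [y n₀]) := by
    rw [hxy, ← pre_succ]; exact self_mem_cyl_pre _ _
  have key : ∀ c : ZMod 2, T P (pre x n₀ ++ [c]) := by
    intro c
    rcases zmod2_cases _ _ c hn₀ with rfl | rfl
    · exact ⟨x, hx1, hxP⟩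
    · exact ⟨y, hy1, hyP⟩
  refine ⟨pre x n₀, ?_, key 0, key 1⟩
  have hpw : pre x w.length = w := mem_cyl_iff_pre.mp hxc
  conv_lhs => rw [← hpw]
  exact pre_prefix x hw

noncomputable def ext1 (w : List (ZMod 2)) (L : ℕ) : List (ZMod 2) :=
  if h : T P w then (exists_extend P h L).choose else w

lemma ext1_spec {w : List (ZMod 2)} (h : T P w) (L : ℕ) :
    w <+: ext1 P w L ∧ L ≤ (ext1 P w L).length ∧ T P (ext1 P w L) := by
  rw [ext1, dif_pos h]
  exact (exists_extend P h L).choose_spec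

noncomputable def br1 (w : List (ZMod 2)) : List (ZMod 2) :=
  if h : T P w ∧ Perfect P then (exists_branch P h.2 h.1).choose else w

lemma br1_spec {w : List (ZMod 2)} (hP : Perfect P) (h : T P w) :
    w <+: br1 P w ∧ T P (br1 P w ++ [0]) ∧ T P (br1 P w ++ [1]) := by
  rw [br1, dif_pos ⟨h, hP⟩]
  exact (exists_branch P hP h).choose_spec

lemma br1_child {w : List (ZMod 2)} (hP : Perfect P) (h : T P w) (b : ZMod 2) :
    T P (br1 P w ++ [b]) := by
  rcases zmod2_cases (0 : ZMod 2) 1 b (by decide) with rfl | rfl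
  · exact (br1_spec P hP h).2.1
  · exact (br1_spec P hP h).2.2

noncomputable def WR : List (ZMod 2) → List (ZMod 2)
  | [] => ext1 P [] (A 0)
  | b :: σr => ext1 P (br1 P (WR σr) ++ [b]) (A (σr.length + 1))

lemma T_nil (hPne : P.Nonempty) : T P [] := by
  simpa [T, cyl_nil] using hPne

lemma WR_spec (hP : Perfect P) (hPne : P.Nonempty) (σr : List (ZMod 2)) :
    T P (WR P A σr) ∧ A σr.length ≤ (WR P A σr).length := by
  induction σr with
  | nil =>
    obtain ⟨_, h2, h3⟩ := ext1_spec P (T_nil P hPne) (A 0)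
    exact ⟨h3, h2⟩
  | cons b σr ih =>
    have h1 : T P (br1 P (WR P A σr) ++ [b]) := br1_child P hP ih.1 b
    obtain ⟨_, h2, h3⟩ := ext1_spec P h1 (A (σr.length + 1))
    exact ⟨h3, by simpa [WR] using h2⟩

noncomputable def Wnode (σ : List (ZMod 2)) : List (ZMod 2) := WR P A σ.reverse

noncomputable def Vnode (σ : List (ZMod 2)) : List (ZMod 2) := br1 P (WR P A σ.reverse)

lemma W_concat (σ : List (ZMod 2)) (b : ZMod 2) :
    Wnode P A (σ ++ [b]) = ext1 P (Vnode P A σ ++ [b]) (A (σ.length + 1)) := by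
  unfold Wnode Vnode
  rw [List.reverse_append]
  simp [WR]

lemma W_T (hP : Perfect P) (hPne : P.Nonempty) (σ : List (ZMod 2)) : T P (Wnode P A σ) :=
  (WR_spec P A hP hPne σ.reverse).1

lemma W_len (hP : Perfect P) (hPne : P.Nonempty) (σ : List (ZMod 2)) :
    A σ.length ≤ (Wnode P A σ).length := by
  have := (WR_spec P A hP hPne σ.reverse).2
  simpa [Wnode] using this

lemma W_prefix_V (hP : Perfect P) (hPne : P.Nonempty) (σ : List (ZMod 2)) :
    Wnode P A σ <+: Vnode P A σ :=
  (br1_spec P hP (W_T P A hP hPne σ)).1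

lemma V_child_T (hP : Perfect P) (hPne : P.Nonempty) (σ : List (ZMod 2)) (b : ZMod 2) :
    T P (Vnode P A σ ++ [b]) :=
  br1_child P hP (W_T P A hP hPne σ) b

lemma VB_prefix_W (hP : Perfect P) (hPne : P.Nonempty) (σ : List (ZMod 2)) (b : ZMod 2) :
    Vnode P A σ ++ [b] <+: Wnode P A (σ ++ [b]) := by
  rw [W_concat]
  exact (ext1_spec P (V_child_T P A hP hPne σ b) _).1

lemma W_prefix_concat (hP : Perfect P) (hPne : P.Nonempty) (σ : List (ZMod 2)) (b : ZMod 2) :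
    Wnode P A σ <+: Wnode P A (σ ++ [b]) :=
  ((W_prefix_V P A hP hPne σ).trans (List.prefix_append _ _)).trans
    (VB_prefix_W P A hP hPne σ b)

lemma W_mono (hP : Perfect P) (hPne : P.Nonempty) {σ τ : List (ZMod 2)} (h : σ <+: τ) :
    Wnode P A σ <+: Wnode P A τ := by
  induction τ using List.reverseRecOn with
  | nil =>
    rw [List.prefix_nil.mp h]
  | append_singleton τ' b ih =>
    rcases List.prefix_concat_iff.mp h with rfl | h'
    · exact List.prefix_refl _
    · exact (ih h').trans (W_prefix_concat P A hP hPne τ' b)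

lemma coord_of_mem_child (hP : Perfect P) (hPne : P.Nonempty) {σ : List (ZMod 2)} {b : ZMod 2}
    {x : CS} (hx : x ∈ cyl (Wnode P A (σ ++ [b]))) :
    x ∈ cyl (Vnode P A σ) ∧ x (Vnode P A σ).length = b := by
  have hx' : x ∈ cyl (Vnode P A σ ++ [b]) := cyl_anti (VB_prefix_W P A hP hPne σ b) hx
  exact ⟨cyl_anti (List.prefix_append _ _) hx', coord_append hx'⟩

noncomputable def eF (b : CS) : CS := fun n => (Wnode P A (pre b (n + 1))).getD n 0

lemma lt_W_len (hP : Perfect P) (hPne : P.Nonempty) (hA : ∀ k, k + 1 ≤ A k)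
    (σ : List (ZMod 2)) : σ.length < (Wnode P A σ).length :=
  lt_of_lt_of_le (Nat.lt_of_lt_of_le (Nat.lt_succ_self _) (hA σ.length))
    (W_len P A hP hPne σ)

lemma e_mem_W (hP : Perfect P) (hPne : P.Nonempty) (hA : ∀ k, k + 1 ≤ A k) (b : CS) (m : ℕ) :
    eF P A b ∈ cyl (Wnode P A (pre b m)) := by
  intro i hi
  show (Wnode P A (pre b (i + 1))).getD i 0 = _
  rcases le_total (i + 1) m with h | h
  · exact getD_of_prefix (W_mono P A hP hPne (pre_prefix b h))
      (by have := lt_W_len P A hP hPne hA (pre b (i + 1)); simp at this; omega)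
  · exact (getD_of_prefix (W_mono P A hP hPne (pre_prefix b h)) hi).symm

lemma e_in_P (hP : Perfect P) (hPne : P.Nonempty) (hA : ∀ k, k + 1 ≤ A k) (b : CS) :
    eF P A b ∈ P := by
  have hcl : eF P A b ∈ closure P := by
    rw [mem_closure_iff]
    intro O hO hmem
    obtain ⟨n, hn⟩ := exists_cyl_pre_subset hO hmem
    obtain ⟨x, hxc, hxP⟩ := W_T P A hP hPne (pre b n)
    refine ⟨x, hn ?_, hxP⟩
    have h1 : eF P A b ∈ cyl (Wnode P A (pre b n)) := e_mem_W P A hP hPne hA b n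
    have h2 : pre (eF P A b) n <+: Wnode P A (pre b n) := by
      rw [← mem_cyl_iff_pre.mp h1]
      exact pre_prefix _ (le_of_lt (by simpa using lt_W_len P A hP hPne hA (pre b n)))
    exact cyl_anti h2 hxc
  rwa [hP.closed.closure_eq] at hcl

lemma e_cont : Continuous (eF P A) := by
  apply continuous_pi
  intro n
  have : (fun b => eF P A b n) =
      (fun v : Fin (n + 1) → ZMod 2 => (Wnode P A (List.ofFn v)).getD n 0) ∘
        (fun b (i : Fin (n + 1)) => b (i : ℕ)) := rfl
  rw [this]
  exact continuous_of_discreteTopology.comp (continuous_pi fun i => continuous_apply (i : ℕ))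

lemma list_first_diff {σ τ : List (ZMod 2)} (hl : σ.length = τ.length) (hne : σ ≠ τ) :
    ∃ i, i < σ.length ∧ σ.take i = τ.take i ∧ σ.getD i 0 ≠ τ.getD i 0 := by
  have hex : ∃ i, σ.getD i 0 ≠ τ.getD i 0 := by
    by_contra h'
    push_neg at h'
    refine hne (List.ext_getElem hl fun i h1 h2 => ?_)
    have := h' i
    rwa [List.getD_eq_getElem _ _ h1, List.getD_eq_getElem _ _ h2] at this
  refine ⟨Nat.find hex, ?_, ?_, Nat.find_spec hex⟩
  · by_contra h'
    push_neg at h'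
    exact Nat.find_spec hex (by
      rw [List.getD_eq_default _ _ h', List.getD_eq_default _ _ (hl ▸ h')])
  · apply List.ext_getElem (by simp [hl])
    intro j h1 h2
    have hj : j < Nat.find hex := by
      simp only [List.length_take, lt_min_iff] at h1
      exact h1.1
    have hmin := of_not_not (Nat.find_min hex hj)
    have hjσ : j < σ.length := by
      simp only [List.length_take, lt_min_iff] at h1
      exact h1.2
    rw [List.getD_eq_getElem _ _ hjσ, List.getD_eq_getElem _ _ (hl ▸ hjσ)] at hmin
    simpa [List.getElem_take] using hmin

lemma take_concat_prefix {σ : List (ZMod 2)} {i : ℕ} (h : i < σ.length) :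
    σ.take i ++ [σ.getD i 0] <+: σ := by
  have heq : σ.take (i + 1) = σ.take i ++ [σ.getD i 0] := by
    rw [List.take_succ, List.getElem?_eq_getElem h, List.getD_eq_getElem _ _ h]
    rfl
  rw [← heq]
  exact List.take_prefix _ _

lemma W_disj (hP : Perfect P) (hPne : P.Nonempty) {σ τ : List (ZMod 2)}
    (hl : σ.length = τ.length) (hne : σ ≠ τ) {x : CS}
    (hx : x ∈ cyl (Wnode P A σ)) (hy : x ∈ cyl (Wnode P A τ)) : False := by
  obtain ⟨i, hi, htake, hdiff⟩ := list_first_diff hl hne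
  have h1 : x ∈ cyl (Wnode P A (σ.take i ++ [σ.getD i 0])) :=
    cyl_anti (W_mono P A hP hPne (take_concat_prefix hi)) hx
  have h2 : x ∈ cyl (Wnode P A (τ.take i ++ [τ.getD i 0])) :=
    cyl_anti (W_mono P A hP hPne (take_concat_prefix (hl ▸ hi))) hy
  rw [← htake] at h2
  have c1 := (coord_of_mem_child P A hP hPne h1).2
  have c2 := (coord_of_mem_child P A hP hPne h2).2
  exact hdiff (c1 ▸ c2 ▸ rfl)

lemma e_inj (hP : Perfect P) (hPne : P.Nonempty) (hA : ∀ k, k + 1 ≤ A k) :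
    Function.Injective (eF P A) := by
  intro b b' h
  by_contra hne
  obtain ⟨n₀, hdiff, hbelow⟩ := exists_first_diff hne
  have hσ : pre b' n₀ = pre b n₀ := pre_congr fun i hi => (hbelow i hi).symm
  have h1 : eF P A b ∈ cyl (Wnode P A (pre b n₀ ++ [b n₀])) := by
    rw [← pre_succ]; exact e_mem_W P A hP hPne hA b (n₀ + 1)
  have h2 : eF P A b' ∈ cyl (Wnode P A (pre b n₀ ++ [b' n₀])) := by
    rw [← hσ, ← pre_succ]; exact e_mem_W P A hP hPne hA b' (n₀ + 1)
  have c1 := (coord_of_mem_child P A hP hPne h1).2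
  have c2 := (coord_of_mem_child P A hP hPne h2).2
  rw [h] at c1
  exact hdiff (c1 ▸ c2 ▸ rfl)

end Construction

section ConstructionTwo

variable (P : Set CS) (A : ℕ → ℕ)

noncomputable def QS : Set CS := Set.range (eF P A)

lemma QS_compact : IsCompact (QS P A) := by
  rw [QS, ← Set.image_univ]
  exact isCompact_univ.image (e_cont P A)

lemma QS_closed : IsClosed (QS P A) := (QS_compact P A).isClosed

lemma QS_meas : MeasurableSet (QS P A) := (QS_closed P A).measurableSet

lemma QS_sub (hP : Perfect P) (hPne : P.Nonempty) (hA : ∀ k, k + 1 ≤ A k) : QS P A ⊆ P :=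
  Set.range_subset_iff.mpr (e_in_P P A hP hPne hA)

lemma QS_ne : (QS P A).Nonempty := Set.range_nonempty _

lemma zmod2_add_one_ne : ∀ a : ZMod 2, a + 1 ≠ a := by decide

lemma QS_perfect (hP : Perfect P) (hPne : P.Nonempty) (hA : ∀ k, k + 1 ≤ A k) :
    Perfect (QS P A) := by
  refine ⟨QS_closed P A, ?_⟩
  intro x hx
  rw [accPt_iff_nhds]
  intro U hU
  obtain ⟨b, rfl⟩ := hx
  obtain ⟨O, hOU, hO, hbO⟩ := mem_nhds_iff.mp hU
  obtain ⟨n, hn⟩ := exists_cyl_pre_subset hO hbO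
  set b' := Function.update b n (b n + 1) with hb'
  have hbb' : b' ≠ b := by
    intro hh
    have := congrFun hh n
    rw [hb'] at this
    simp only [Function.update_self] at this
    exact zmod2_add_one_ne (b n) this
  have hagree : ∀ i < n, b' i = b i := by
    intro i hi
    rw [hb']
    exact Function.update_of_ne (by omega) _ _
  have h1 : ∀ i < n, eF P A b' i = eF P A b i := by
    intro i hi
    show (Wnode P A (pre b' (i + 1))).getD i 0 = (Wnode P A (pre b (i + 1))).getD i 0
    rw [pre_congr (fun j hj => hagree j (by omega))]
  refine ⟨eF P A b', ⟨hOU (hn (mem_cyl_pre.mpr h1)), ⟨b', rfl⟩⟩, ?_⟩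
  intro hh
  exact hbb' (e_inj P A hP hPne hA hh)

lemma preW (hP : Perfect P) (hPne : P.Nonempty) (hA : ∀ k, k + 1 ≤ A k) (σ : List (ZMod 2)) :
    eF P A ⁻¹' cyl (Wnode P A σ) = cyl σ := by
  ext b
  simp only [Set.mem_preimage]
  constructor
  · intro hb
    by_contra hbc
    have hpre : pre b σ.length ≠ σ := fun hh => hbc (mem_cyl_iff_pre.mpr hh)
    exact W_disj P A hP hPne (by simp) hpre (e_mem_W P A hP hPne hA b σ.length) hb
  · intro hb
    have := e_mem_W P A hP hPne hA b σ.length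
    rwa [mem_cyl_iff_pre.mp hb] at this

lemma preChild (hP : Perfect P) (hPne : P.Nonempty) (hA : ∀ k, k + 1 ≤ A k)
    (σ : List (ZMod 2)) (c : ZMod 2) :
    eF P A ⁻¹' cyl (Vnode P A σ ++ [c]) = cyl (σ ++ [c]) := by
  ext b
  simp only [Set.mem_preimage]
  constructor
  · intro hb
    have h1 : eF P A b ∈ cyl (Wnode P A σ) :=
      cyl_anti ((W_prefix_V P A hP hPne σ).trans (List.prefix_append _ _)) hb
    have h2 : pre b σ.length = σ := by
      have : b ∈ cyl σ := by rw [← preW P A hP hPne hA σ]; exact h1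
      exact mem_cyl_iff_pre.mp ((by simpa using this))
    have h3 : eF P A b ∈ cyl (Vnode P A σ ++ [b σ.length]) := by
      have h4 := e_mem_W P A hP hPne hA b (σ.length + 1)
      rw [pre_succ, h2] at h4
      exact cyl_anti (VB_prefix_W P A hP hPne σ _) h4
    have c1 : eF P A b (Vnode P A σ).length = c := coord_append hb
    have c2 : eF P A b (Vnode P A σ).length = b σ.length := coord_append h3
    have hbc : b σ.length = c := by rw [← c2, c1]
    rw [mem_cyl_iff_pre, List.length_append, List.length_singleton, pre_succ, h2, hbc]
  · intro hb
    have h2 : pre b (σ.length + 1) = σ ++ [c] := by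
      have := mem_cyl_iff_pre.mp hb
      simpa using this
    have h4 := e_mem_W P A hP hPne hA b (σ.length + 1)
    rw [h2] at h4
    exact cyl_anti (VB_prefix_W P A hP hPne σ c) h4

lemma branch_char (hP : Perfect P) (hPne : P.Nonempty) (hA : ∀ k, k + 1 ≤ A k)
    {u : List (ZMod 2)} (hu : Branch (QS P A) u) : ∃ σ, u = Vnode P A σ := by
  obtain ⟨⟨q0, hq0c, hq0⟩, ⟨q1, hq1c, hq1⟩⟩ := hu
  obtain ⟨b0, rfl⟩ := hq0
  obtain ⟨b1, rfl⟩ := hq1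
  have h01 : eF P A b0 u.length = 0 := coord_append hq0c
  have h11 : eF P A b1 u.length = 1 := coord_append hq1c
  have hne : b0 ≠ b1 := by
    rintro rfl
    rw [h01] at h11
    exact absurd h11 (by decide)
  obtain ⟨n₀, hdiff, hbelow⟩ := exists_first_diff hne
  have hσ : pre b1 n₀ = pre b0 n₀ := pre_congr fun i hi => (hbelow i hi).symm
  have e0 : eF P A b0 ∈ cyl (Vnode P A (pre b0 n₀) ++ [b0 n₀]) := by
    have h4 := e_mem_W P A hP hPne hA b0 (n₀ + 1)
    rw [pre_succ] at h4
    exact cyl_anti (VB_prefix_W P A hP hPne _ _) h4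
  have e1 : eF P A b1 ∈ cyl (Vnode P A (pre b0 n₀) ++ [b1 n₀]) := by
    have h4 := e_mem_W P A hP hPne hA b1 (n₀ + 1)
    rw [pre_succ, hσ] at h4
    exact cyl_anti (VB_prefix_W P A hP hPne _ _) h4
  set V := Vnode P A (pre b0 n₀) with hV
  have hVlen0 : eF P A b0 V.length = b0 n₀ := coord_append e0
  have hVlen1 : eF P A b1 V.length = b1 n₀ := coord_append e1
  have hagreeV : ∀ i < V.length, eF P A b0 i = eF P A b1 i := by
    intro i hi
    have m0 : eF P A b0 ∈ cyl V := cyl_anti (List.prefix_append _ _) e0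
    have m1 : eF P A b1 ∈ cyl V := cyl_anti (List.prefix_append _ _) e1
    rw [m0 i hi, m1 i hi]
  have hagreeU : ∀ i < u.length, eF P A b0 i = eF P A b1 i := by
    intro i hi
    have m0 : eF P A b0 ∈ cyl u := cyl_anti (List.prefix_append _ _) hq0c
    have m1 : eF P A b1 ∈ cyl u := cyl_anti (List.prefix_append _ _) hq1c
    rw [m0 i hi, m1 i hi]
  have hlen : u.length = V.length := by
    rcases lt_trichotomy u.length V.length with h | h | h
    · have := hagreeV u.length h
      rw [h01, h11] at this
      exact absurd this (by decide)
    · exact h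
    · have := hagreeU V.length h
      rw [hVlen0, hVlen1] at this
      exact absurd this hdiff
  exact ⟨pre b0 n₀, eq_of_mem_of_length (cyl_anti (List.prefix_append _ _) hq0c)
    (cyl_anti (List.prefix_append _ _) e0) hlen⟩

lemma eF_meas : Measurable (eF P A) := (e_cont P A).measurable

noncomputable def νQ (μ : Measure CS) : Measure CS := μ.map (eF P A)

lemma νQ_apply (μ : Measure CS) {s : Set CS} (hs : MeasurableSet s) :
    νQ P A μ s = μ (eF P A ⁻¹' s) :=
  Measure.map_apply (eF_meas P A) hs

lemma νQ_canonical {μ : Measure CS} (hμ : IsFairCoin μ) (hP : Perfect P) (hPne : P.Nonempty)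
    (hA : ∀ k, k + 1 ≤ A k) : IsCanonical (QS P A) (νQ P A μ) := by
  haveI := hμ.1
  refine ⟨Measure.isProbabilityMeasure_map (eF_meas P A).aemeasurable, ?_, ?_⟩
  · rw [νQ_apply P A μ (QS_meas P A)]
    have huniv : eF P A ⁻¹' QS P A = Set.univ := eq_univ_of_forall fun b => ⟨b, rfl⟩
    rw [huniv]
    exact measure_univ
  · intro w hw
    obtain ⟨σ, rfl⟩ := branch_char P A hP hPne hA hw
    rw [νQ_apply _ _ _ (measurableSet_cyl _), νQ_apply _ _ _ (measurableSet_cyl _),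
      preChild P A hP hPne hA σ 0, preChild P A hP hPne hA σ 1, hμ.2, hμ.2]
    simp

lemma νQ_noAtoms {μ : Measure CS} (hμ : IsFairCoin μ) (hP : Perfect P) (hPne : P.Nonempty)
    (hA : ∀ k, k + 1 ≤ A k) (x : CS) : νQ P A μ {x} = 0 := by
  rw [νQ_apply P A μ (measurableSet_singleton x)]
  by_cases h : ∃ b, eF P A b = x
  · obtain ⟨b, rfl⟩ := h
    have hsub : eF P A ⁻¹' {eF P A b} ⊆ {b} := fun y hy =>
      e_inj P A hP hPne hA (by simpa using hy)
    exact le_antisymm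
      ((measure_mono hsub).trans (le_of_eq (singleton_null hμ b))) zero_le
  · have hemp : eF P A ⁻¹' {x} = ∅ := by
      apply Set.eq_empty_iff_forall_notMem.mpr
      intro y hy
      exact h ⟨y, by simpa using hy⟩
    rw [hemp, measure_empty]

lemma ofFn_getD {n : ℕ} (f : Fin n → ZMod 2) {i : ℕ} (h : i < n) :
    (List.ofFn f).getD i 0 = f ⟨i, h⟩ := by
  rw [List.getD_eq_getElem _ _ (by simpa using h)]
  simp

lemma add_cyl_cyl {w u : List (ZMod 2)} (h : w.length ≤ u.length) :
    cyl w + cyl u ⊆ cyl (List.ofFn fun i : Fin w.length => w.getD i 0 + u.getD i 0) := by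
  rintro z ⟨x, hx, y, hy, rfl⟩
  intro i hi
  simp only [List.length_ofFn] at hi
  rw [ofFn_getD _ hi]
  show x i + y i = _
  rw [hx i hi, hy i (lt_of_lt_of_le hi h)]

lemma measure_add_cyl {μ : Measure CS} (hμ : IsFairCoin μ) (hP : Perfect P) (hPne : P.Nonempty)
    (hA : ∀ k, k + 1 ≤ A k) {u : List (ZMod 2)} {j : ℕ} (hm : u.length ≤ A j) :
    μ (QS P A + cyl u) ≤ 2 ^ j * (2 : ℝ≥0∞)⁻¹ ^ u.length := by
  set m := u.length with hmdef
  have hcov : QS P A + cyl u ⊆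
      ⋃ v : Fin j → ZMod 2, (cyl ((Wnode P A (List.ofFn v)).take m) + cyl u) := by
    rintro z ⟨q, hq, y, hy, rfl⟩
    obtain ⟨b, rfl⟩ := hq
    refine Set.mem_iUnion.mpr ⟨fun i : Fin j => b i, Set.add_mem_add ?_ hy⟩
    have h1 : eF P A b ∈ cyl (Wnode P A (pre b j)) := e_mem_W P A hP hPne hA b j
    exact cyl_anti (List.take_prefix m _) h1
  have hbound : ∀ v : Fin j → ZMod 2,
      μ (cyl ((Wnode P A (List.ofFn v)).take m) + cyl u) ≤ (2 : ℝ≥0∞)⁻¹ ^ m := by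
    intro v
    have hWlen : m ≤ (Wnode P A (List.ofFn v)).length :=
      le_trans hm (by simpa using W_len P A hP hPne (List.ofFn v))
    have hlen : ((Wnode P A (List.ofFn v)).take m).length = m := by
      rw [List.length_take]
      exact min_eq_left hWlen
    have hsub := add_cyl_cyl (w := (Wnode P A (List.ofFn v)).take m) (u := u)
      (by rw [hlen])
    calc μ (cyl ((Wnode P A (List.ofFn v)).take m) + cyl u)
        ≤ μ (cyl (List.ofFn fun i : Fin ((Wnode P A (List.ofFn v)).take m).length =>
            ((Wnode P A (List.ofFn v)).take m).getD i 0 + u.getD i 0)) := measure_mono hsub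
      _ = (2 : ℝ≥0∞)⁻¹ ^ m := by rw [hμ.2]; simp [hlen]
  calc μ (QS P A + cyl u)
      ≤ ∑' v : Fin j → ZMod 2, μ (cyl ((Wnode P A (List.ofFn v)).take m) + cyl u) :=
        (measure_mono hcov).trans (measure_iUnion_le _)
    _ ≤ ∑' _v : Fin j → ZMod 2, (2 : ℝ≥0∞)⁻¹ ^ m := ENNReal.tsum_le_tsum hbound
    _ = 2 ^ j * (2 : ℝ≥0∞)⁻¹ ^ m := by
        rw [tsum_fintype, Finset.sum_const, Finset.card_univ]
        simp only [nsmul_eq_mul]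
        congr 1
        rw [Fintype.card_fun]
        simp [ZMod.card]

end ConstructionTwo


/-! ### EKM: a fused perfect subset with null sum -/

def shiftEquiv (N : ℕ) : ℕ ≃ {n : ℕ | N ≤ n} :=
  ⟨fun m => ⟨m + N, by simp⟩, fun n => (n : ℕ) - N,
   fun m => by simp, fun n => by
     obtain ⟨n, hn⟩ := n
     simp only [Set.mem_setOf_eq] at hn
     simp only [Subtype.mk.injEq]
     omega⟩

@[simp] lemma shiftEquiv_coe (N m : ℕ) : ((shiftEquiv N m : ℕ)) = m + N := rfl

lemma tsum_tail_le (f : ℕ → ℝ≥0∞) (N : ℕ) :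
    ∑' n, (if N ≤ n then f n else 0) ≤ ∑' m, f (m + N) := by
  have hsupp : Function.support (fun n => if N ≤ n then f n else 0) ⊆ {n | N ≤ n} := by
    intro n hn
    by_contra h
    simp only [Set.mem_setOf_eq] at h
    simp [if_neg h] at hn
  rw [← tsum_subtype_eq_of_support_subset hsupp]
  rw [← Equiv.tsum_eq (shiftEquiv N)]
  apply ENNReal.tsum_le_tsum
  intro m
  rw [shiftEquiv_coe, if_pos (show N ≤ m + N by omega)]

lemma two_pow_mul_inv_pow {a b : ℕ} (h : a ≤ b) :
    (2 : ℝ≥0∞) ^ a * 2⁻¹ ^ b = 2⁻¹ ^ (b - a) := by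
  rw [show b = a + (b - a) by omega, pow_add, ← mul_assoc, ← mul_pow,
    ENNReal.mul_inv_cancel (by norm_num) (by norm_num), one_pow, one_mul]
  congr 1
  omega

lemma inv_two_pow_anti {a b : ℕ} (h : a ≤ b) : (2 : ℝ≥0∞)⁻¹ ^ b ≤ 2⁻¹ ^ a :=
  pow_le_pow_of_le_one zero_le (by simp [ENNReal.inv_le_one]) h

noncomputable def AF (L : ℕ → ℕ → ℕ) : ℕ → ℕ
  | 0 => 1
  | (i + 1) => max (AF L i + 1)
      (max (i + 2) ((Finset.range (i + 2)).sup (fun k' => L k' (i + 1))))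

lemma master {μ : Measure CS} (hμ : IsFairCoin μ) {X : Set CS} (hX0 : μ X = 0)
    {P : Set CS} (hP : Perfect P) (hPne : P.Nonempty) :
    ∃ A : ℕ → ℕ, (∀ k, k + 1 ≤ A k) ∧ μ (QS P A + X) = 0 := by
  classical
  -- covers of X
  have hC : ∀ k : ℕ, ∃ C : ℕ → List (ZMod 2), X ⊆ ⋃ n, cyl (C n) ∧
      ∑' n, (2 : ℝ≥0∞)⁻¹ ^ (C n).length ≤ (2 : ℝ≥0∞)⁻¹ ^ (3 * k) :=
    fun k => cover_of_null hμ hX0 (pow_ne_zero _ (by simp))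
  choose C hCcov hCsum using hC
  set w : ℕ → ℕ → ℝ≥0∞ := fun k n => (2 : ℝ≥0∞)⁻¹ ^ (C k n).length with hw
  set tailS : ℕ → ℕ → ℝ≥0∞ :=
    fun k L => ∑' n, (if L < (C k n).length then w k n else 0) with htailS
  -- tails vanish
  have htail : ∀ k i : ℕ, ∃ L₀, ∀ L ≥ L₀, tailS k L ≤ (2 : ℝ≥0∞)⁻¹ ^ (3 * i) := by
    intro k i
    have hfin : ∑' n, w k n ≠ ⊤ :=
      (lt_of_le_of_lt (hCsum k)
        (ENNReal.pow_lt_top (ENNReal.inv_lt_top.mpr (by norm_num)))).ne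
    have htend := ENNReal.tendsto_sum_nat_add (w k) hfin
    have hpos : (0 : ℝ≥0∞) < 2⁻¹ ^ (3 * i) :=
      pos_iff_ne_zero.mpr (pow_ne_zero _ (ENNReal.inv_ne_zero.mpr ENNReal.ofNat_ne_top))
    obtain ⟨N, hN⟩ := (htend.eventually_lt_const hpos).exists
    refine ⟨(Finset.range N).sup (fun n => (C k n).length), ?_⟩
    intro L hL
    have hle : tailS k L ≤ ∑' n, (if N ≤ n then w k n else 0) := by
      apply ENNReal.tsum_le_tsum
      intro n
      by_cases hcond : L < (C k n).length
      · rw [if_pos hcond]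
        have hn : N ≤ n := by
          by_contra hn'
          push_neg at hn'
          have : (C k n).length ≤ L :=
            le_trans (Finset.le_sup (f := fun n => (C k n).length)
              (Finset.mem_range.mpr hn')) hL
          omega
        rw [if_pos hn]
      · simp [if_neg hcond]
    exact hle.trans ((tsum_tail_le (w k) N).trans hN.le)
  choose L₀ hL₀ using htail
  -- the level requirements
  set A : ℕ → ℕ := AF L₀ with hAdef
  have hstepA : ∀ i, A (i + 1) = max (A i + 1)
      (max (i + 2) ((Finset.range (i + 2)).sup (fun k'' => L₀ k'' (i + 1)))) := by
    intro i
    rw [hAdef]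
    rfl
  have hA : ∀ k, k + 1 ≤ A k := by
    intro k
    cases k with
    | zero => rw [hAdef]; exact le_refl 1
    | succ i =>
      rw [hstepA i]
      exact le_trans (le_max_left _ _) (le_max_right _ _)
  have hA2 : ∀ i k', k' < i + 2 → tailS k' (A (i + 1)) ≤ (2 : ℝ≥0∞)⁻¹ ^ (3 * (i + 1)) := by
    intro i k' hk'
    apply hL₀ k' (i + 1)
    show L₀ k' (i + 1) ≤ A (i + 1)
    rw [hstepA i]
    exact le_trans (Finset.le_sup (f := fun k'' => L₀ k'' (i + 1))
      (Finset.mem_range.mpr hk')) (le_trans (le_max_right _ _) (le_max_right _ _))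
  refine ⟨A, hA, ?_⟩
  -- final estimate
  have key : ∀ k, 1 ≤ k → μ (QS P A + X) ≤ 4 * (2 : ℝ≥0∞)⁻¹ ^ k := by
    intro k hk
    have hsub : QS P A + X ⊆ ⋃ n, (QS P A + cyl (C k n)) := by
      rintro z ⟨q, hq, x, hx, rfl⟩
      obtain ⟨n, hn⟩ := Set.mem_iUnion.mp (hCcov k hx)
      exact Set.mem_iUnion.mpr ⟨n, Set.add_mem_add hq hn⟩
    have hjex : ∀ n : ℕ, ∃ j, (C k n).length ≤ A j := by
      intro n
      exact ⟨(C k n).length, le_trans (Nat.le_succ _) (hA _)⟩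
    set j : ℕ → ℕ := fun n => Nat.find (hjex n) with hj
    have hjspec : ∀ n, (C k n).length ≤ A (j n) := fun n => Nat.find_spec (hjex n)
    set g2 : ℕ → ℕ → ℝ≥0∞ := fun i n =>
      2 ^ (2 * k + 1 + i) * (if A (2 * k + i) < (C k n).length then w k n else 0) with hg2
    have hper : ∀ n, μ (QS P A + cyl (C k n)) ≤ 2 ^ (2 * k) * w k n + ∑' i, g2 i n := by
      intro n
      have hbase : μ (QS P A + cyl (C k n)) ≤ 2 ^ (j n) * (2 : ℝ≥0∞)⁻¹ ^ (C k n).length :=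
        measure_add_cyl P A hμ hP hPne hA (hjspec n)
      by_cases hcase : j n ≤ 2 * k
      · refine le_trans hbase (le_trans ?_ le_self_add)
        exact mul_le_mul_left (pow_le_pow_right₀ one_le_two hcase) _
      · push_neg at hcase
        set i := j n - (2 * k + 1) with hi
        have hji : j n = 2 * k + 1 + i := by omega
        have hmin : A (2 * k + i) < (C k n).length := by
          have := Nat.find_min (hjex n) (show 2 * k + i < j n by omega)
          omega
        have : (2:ℝ≥0∞) ^ (j n) * (2 : ℝ≥0∞)⁻¹ ^ (C k n).length ≤ g2 i n := by
          rw [hg2]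
          simp only [if_pos hmin, hji]
          rw [hw]
        refine le_trans hbase (le_trans this (le_trans (ENNReal.le_tsum i) le_add_self))
    calc μ (QS P A + X) ≤ μ (⋃ n, (QS P A + cyl (C k n))) := measure_mono hsub
      _ ≤ ∑' n, μ (QS P A + cyl (C k n)) := measure_iUnion_le _
      _ ≤ ∑' n, (2 ^ (2 * k) * w k n + ∑' i, g2 i n) := ENNReal.tsum_le_tsum hper
      _ = 2 ^ (2 * k) * (∑' n, w k n) + ∑' n, ∑' i, g2 i n := by
          rw [ENNReal.tsum_add, ENNReal.tsum_mul_left]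
      _ ≤ 2 ^ (2 * k) * (2 : ℝ≥0∞)⁻¹ ^ (3 * k) + ∑' i, ∑' n, g2 i n := by
          refine add_le_add (mul_le_mul_right (hCsum k) _) ?_
          rw [ENNReal.tsum_comm]
      _ ≤ (2 : ℝ≥0∞)⁻¹ ^ k + 2 * (2 : ℝ≥0∞)⁻¹ ^ (4 * k - 1) := by
          refine add_le_add ?_ ?_
          · rw [two_pow_mul_inv_pow (by omega)]
            exact inv_two_pow_anti (by omega)
          · have hinner : ∀ i : ℕ, ∑' n, g2 i n ≤
                (2 : ℝ≥0∞)⁻¹ ^ (4 * k - 1) * 2⁻¹ ^ i := by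
              intro i
              have h1 : ∑' n, g2 i n = 2 ^ (2 * k + 1 + i) * tailS k (A (2 * k + i)) := by
                rw [hg2, htailS, ← ENNReal.tsum_mul_left]
              rw [h1]
              have h2 : tailS k (A (2 * k + i)) ≤ (2 : ℝ≥0∞)⁻¹ ^ (3 * (2 * k + i)) := by
                have h3 := hA2 (2 * k + i - 1) k (by omega)
                have h4 : 2 * k + i - 1 + 1 = 2 * k + i := by omega
                rwa [h4] at h3
              calc 2 ^ (2 * k + 1 + i) * tailS k (A (2 * k + i))
                  ≤ 2 ^ (2 * k + 1 + i) * (2 : ℝ≥0∞)⁻¹ ^ (3 * (2 * k + i)) :=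
                    mul_le_mul_right h2 _
                _ = (2 : ℝ≥0∞)⁻¹ ^ (3 * (2 * k + i) - (2 * k + 1 + i)) :=
                    two_pow_mul_inv_pow (by omega)
                _ ≤ (2 : ℝ≥0∞)⁻¹ ^ (4 * k - 1 + i) := inv_two_pow_anti (by omega)
                _ = (2 : ℝ≥0∞)⁻¹ ^ (4 * k - 1) * 2⁻¹ ^ i := pow_add _ _ _
            calc ∑' i, ∑' n, g2 i n ≤ ∑' i, (2 : ℝ≥0∞)⁻¹ ^ (4 * k - 1) * 2⁻¹ ^ i :=
                  ENNReal.tsum_le_tsum hinner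
              _ = (2 : ℝ≥0∞)⁻¹ ^ (4 * k - 1) * 2 := by
                  rw [ENNReal.tsum_mul_left, ENNReal.tsum_geometric, ENNReal.one_sub_inv_two]
                  congr 1
                  simp
              _ = 2 * (2 : ℝ≥0∞)⁻¹ ^ (4 * k - 1) := mul_comm _ _
      _ ≤ 4 * (2 : ℝ≥0∞)⁻¹ ^ k := by
          have h5 : (2 : ℝ≥0∞)⁻¹ ^ (4 * k - 1) ≤ 2⁻¹ ^ k := inv_two_pow_anti (by omega)
          calc (2 : ℝ≥0∞)⁻¹ ^ k + 2 * (2 : ℝ≥0∞)⁻¹ ^ (4 * k - 1)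
              ≤ (2 : ℝ≥0∞)⁻¹ ^ k + 2 * (2 : ℝ≥0∞)⁻¹ ^ k := by
                exact add_le_add le_rfl (mul_le_mul_right h5 _)
            _ ≤ 4 * (2 : ℝ≥0∞)⁻¹ ^ k := by
                rw [show (2:ℝ≥0∞)⁻¹ ^ k + 2 * (2:ℝ≥0∞)⁻¹ ^ k = 3 * 2⁻¹ ^ k by ring]
                exact mul_le_mul_left (by norm_num) _
  -- conclude
  by_contra h0
  obtain ⟨n, hn⟩ := ENNReal.exists_inv_two_pow_lt
    (ENNReal.div_ne_zero.mpr ⟨h0, by norm_num⟩ :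
      μ (QS P A + X) / 4 ≠ 0)
  have h6 : μ (QS P A + X) ≤ 4 * (2 : ℝ≥0∞)⁻¹ ^ (n + 1) := key (n + 1) (by omega)
  have h7 : (4 : ℝ≥0∞) * 2⁻¹ ^ (n + 1) ≤ 4 * 2⁻¹ ^ n :=
    mul_le_mul_right (inv_two_pow_anti (by omega)) _
  have h8 : (4 : ℝ≥0∞) * 2⁻¹ ^ n < 4 * (μ (QS P A + X) / 4) :=
    (ENNReal.mul_lt_mul_iff_right (by norm_num) (by norm_num)).mpr hn
  rw [ENNReal.mul_div_cancel (by norm_num) (by norm_num)] at h8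
  exact absurd ((h6.trans h7).trans_lt h8) (lt_irrefl _)


/-! ### Translation invariance of canonicity, and the main theorem -/

lemma cs_add_add (x s : CS) : x + s + s = x := by
  funext n
  show x n + s n + s n = x n
  rw [add_assoc, CharTwo.add_self_eq_zero, add_zero]

def trL (s : CS) (u : List (ZMod 2)) : List (ZMod 2) :=
  List.ofFn (fun i : Fin u.length => u.getD i 0 + s i)

@[simp] lemma trL_length (s : CS) (u : List (ZMod 2)) : (trL s u).length = u.length := by
  simp [trL]

lemma trL_getD (s : CS) (u : List (ZMod 2)) {i : ℕ} (h : i < u.length) :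
    (trL s u).getD i 0 = u.getD i 0 + s i := by
  rw [trL, ofFn_getD _ h]

lemma preimage_add_cyl (s : CS) (u : List (ZMod 2)) :
    (fun x : CS => x + s) ⁻¹' cyl u = cyl (trL s u) := by
  ext x
  simp only [Set.mem_preimage]
  constructor
  · intro h i hi
    rw [trL_length] at hi
    rw [trL_getD s u hi, ← h i hi]
    show x i = x i + s i + s i
    rw [add_assoc, CharTwo.add_self_eq_zero, add_zero]
  · intro h i hi
    show x i + s i = u.getD i 0
    have := h i (by simpa using hi)
    rw [trL_getD s u hi] at this
    rw [this, add_assoc, CharTwo.add_self_eq_zero, add_zero]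

lemma trL_append (s : CS) (u : List (ZMod 2)) (c : ZMod 2) :
    trL s (u ++ [c]) = trL s u ++ [c + s u.length] := by
  apply List.ext_getElem (by simp)
  intro i h1 h2
  have h1' : i < u.length + 1 := by simpa [trL] using h1
  have hL : (trL s (u ++ [c]))[i] = (u ++ [c]).getD i 0 + s i := by
    simp only [trL, List.getElem_ofFn]
  rw [hL]
  rcases Nat.lt_or_ge i u.length with hi | hi
  · have hR : (trL s u ++ [c + s u.length])[i] = (trL s u)[i]'(by simpa using hi) :=
      List.getElem_append_left (by simpa using hi)
    rw [hR]
    simp only [trL, List.getElem_ofFn]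
    congr 1
    exact (getD_of_prefix (List.prefix_append u [c]) hi).symm
  · have hieq : i = u.length := by omega
    subst hieq
    have hR : (trL s u ++ [c + s u.length])[u.length]'h2 = c + s u.length :=
      List.getElem_concat_length (by simp) _
    rw [hR, getD_append_self]

lemma both_children {R : Set CS} {v : List (ZMod 2)} {c0 c1 : ZMod 2} (h : c0 ≠ c1)
    (h0 : (cyl (v ++ [c0]) ∩ R).Nonempty) (h1 : (cyl (v ++ [c1]) ∩ R).Nonempty) :
    Branch R v := by
  constructor
  · rcases zmod2_cases c0 c1 0 h with hc | hc
    · rw [hc]; exact h0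
    · rw [hc]; exact h1
  · rcases zmod2_cases c0 c1 1 h with hc | hc
    · rw [hc]; exact h0
    · rw [hc]; exact h1

lemma balanced_any {Q : Set CS} {ν : Measure CS} (hν : IsCanonical Q ν) {v : List (ZMod 2)}
    (hB : Branch Q v) (a a' : ZMod 2) : ν (cyl (v ++ [a])) = ν (cyl (v ++ [a'])) := by
  have hbal := hν.2.2 v hB
  have h01 : ∀ b : ZMod 2, b = 0 ∨ b = 1 := fun b => zmod2_cases 0 1 b (by decide)
  rcases h01 a with rfl | rfl <;> rcases h01 a' with rfl | rfl
  · rfl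
  · exact hbal
  · exact hbal.symm
  · rfl

lemma translate_null {X : Set CS} (hX : PerfectlyNull X) {Q : Set CS} (hQperf : Perfect Q)
    (hQne : Q.Nonempty) {ν : Measure CS} (hν : IsCanonical Q ν) (s : CS) :
    ν (({s} + X) ∩ Q) = 0 := by
  set f : CS → CS := fun x => x + s with hfdef
  have hff : ∀ x, f (f x) = x := fun x => cs_add_add x s
  have hfc : Continuous f := by
    apply continuous_pi
    intro n
    exact (continuous_of_discreteTopology (f := fun a : ZMod 2 => a + s n)).comp
      (continuous_apply n)
  have hfm : Measurable f := hfc.measurable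
  have hfinj : Function.Injective f := by
    intro a b hab
    have := congrArg f hab
    rwa [hff, hff] at this
  set Qs : Set CS := f '' Q with hQs
  have hQclosed : IsClosed Q := hQperf.closed
  have hQsclosed : IsClosed Qs := by
    have : Qs = f ⁻¹' Q := by
      ext x
      constructor
      · rintro ⟨q, hq, rfl⟩
        simpa [Set.mem_preimage, hff] using hq
      · intro hx
        exact ⟨f x, hx, hff x⟩
    rw [this]
    exact hQclosed.preimage hfc
  have hQsperf : Perfect Qs := by
    refine ⟨hQsclosed, ?_⟩
    rintro x ⟨q, hq, rfl⟩
    rw [accPt_iff_nhds]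
    intro U hU
    have hpre : f ⁻¹' U ∈ nhds q := hfc.continuousAt.preimage_mem_nhds hU
    obtain ⟨y, ⟨hyU, hyQ⟩, hyq⟩ := (accPt_iff_nhds).mp (hQperf.acc q hq) _ hpre
    exact ⟨f y, ⟨hyU, ⟨y, hyQ, rfl⟩⟩, fun hc => hyq (hfinj hc)⟩
  have hQsne : Qs.Nonempty := hQne.image f
  have hpreQs : f ⁻¹' Qs = Q := by
    ext x
    constructor
    · rintro ⟨q, hq, hfq⟩
      rwa [← hfinj hfq]
    · intro hx
      exact ⟨x, hx, rfl⟩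
  haveI := hν.1
  set νs : Measure CS := ν.map f with hνs
  have hνs_apply : ∀ {t : Set CS}, MeasurableSet t → νs t = ν (f ⁻¹' t) :=
    fun ht => Measure.map_apply hfm ht
  have hνscanon : IsCanonical Qs νs := by
    refine ⟨Measure.isProbabilityMeasure_map hfm.aemeasurable, ?_, ?_⟩
    · rw [hνs_apply hQsclosed.measurableSet, hpreQs]
      exact hν.2.1
    · intro u hu
      have hB : Branch Q (trL s u) := by
        have hchild : ∀ c : ZMod 2, (cyl (u ++ [c]) ∩ Qs).Nonempty →
            (cyl (trL s u ++ [c + s u.length]) ∩ Q).Nonempty := by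
          rintro c ⟨z, hzc, q, hq, rfl⟩
          refine ⟨q, ?_, hq⟩
          have : q ∈ f ⁻¹' cyl (u ++ [c]) := by
            simpa [Set.mem_preimage] using hzc
          rw [preimage_add_cyl, trL_append] at this
          exact this
        have h0 := hchild 0 hu.1
        have h1 := hchild 1 hu.2
        exact both_children (by
          intro hc
          have : (0 : ZMod 2) = 1 := by
            have := congrArg (fun a => a + s u.length) hc
            simpa [add_assoc, CharTwo.add_self_eq_zero] using this
          exact absurd this (by decide)) h0 h1
      rw [hνs_apply (measurableSet_cyl _), hνs_apply (measurableSet_cyl _),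
        preimage_add_cyl, preimage_add_cyl, trL_append, trL_append]
      exact balanced_any hν hB _ _
  have hXnull := hX Qs ⟨hQsperf, hQsne⟩ νs hνscanon
  have hsub : ({s} + X) ∩ Q ⊆ f ⁻¹' (X ∩ Qs) := by
    rintro z ⟨⟨s', hs', x, hx, rfl⟩, hzQ⟩
    rw [Set.mem_singleton_iff] at hs'
    constructor
    · show f (s' + x) ∈ X
      have hfx : f (s' + x) = x := by
        rw [hfdef, hs']
        show s + x + s = x
        funext n
        show s n + x n + s n = x n
        rw [add_comm (s n) (x n), add_assoc, CharTwo.add_self_eq_zero, add_zero]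
      rw [hfx]
      exact hx
    · exact ⟨s' + x, hzQ, rfl⟩
  refine le_antisymm ?_ zero_le
  calc ν (({s} + X) ∩ Q) ≤ ν (f ⁻¹' (X ∩ Qs)) := measure_mono hsub
    _ ≤ νs (X ∩ Qs) := Measure.le_map_apply hfm.aemeasurable _
    _ = 0 := hXnull


lemma perfect_univ : PerfSet (Set.univ : Set CS) := by
  refine ⟨⟨isClosed_univ, ?_⟩, ⟨fun _ => 0, trivial⟩⟩
  intro x _
  rw [accPt_iff_nhds]
  intro U hU
  obtain ⟨O, hOU, hO, hxO⟩ := mem_nhds_iff.mp hU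
  obtain ⟨n, hn⟩ := exists_cyl_pre_subset hO hxO
  set y := Function.update x n (x n + 1) with hy
  have hyx : y ≠ x := by
    intro hh
    have := congrFun hh n
    rw [hy] at this
    simp only [Function.update_self] at this
    exact zmod2_add_one_ne (x n) this
  refine ⟨y, ⟨hOU (hn ?_), trivial⟩, hyx⟩
  apply mem_cyl_pre.mpr
  intro i hi
  rw [hy]
  exact Function.update_of_ne (by omega) _ _

lemma fair_canonical_univ {μ : Measure CS} (hμ : IsFairCoin μ) :
    IsCanonical Set.univ μ := by
  refine ⟨hμ.1, by simpa using (hμ.1).measure_univ, fun w _ => ?_⟩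
  rw [hμ.2, hμ.2]
  simp

lemma X_null {μ : Measure CS} (hμ : IsFairCoin μ) {X : Set CS} (hX : PerfectlyNull X) :
    μ X = 0 := by
  have := hX Set.univ perfect_univ μ (fair_canonical_univ hμ)
  simpa using this

end Work

/-- The algebraic sum of a Sierpiński set and a perfectly null set is an
`s₀`-set. -/
theorem stmt_11 (μ : Measure CS) (hμ : IsFairCoin μ) (S : Set CS) (hS : Sierpinski μ S)
    (X : Set CS) (hX : PerfectlyNull X) : S0Set (S + X) := by
  intro P hPs
  obtain ⟨hP, hPne⟩ := hPs
  have hXnull : μ X = 0 := Work.X_null hμ hX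
  obtain ⟨A, hA, hQXnull⟩ := Work.master hμ hXnull hP hPne
  set Q := Work.QS P A with hQdef
  set ν := Work.νQ P A μ with hνdef
  have hνcanon := Work.νQ_canonical P A hμ hP hPne hA
  have hQperf := Work.QS_perfect P A hP hPne hA
  have hQne := Work.QS_ne P A
  have hQsubP := Work.QS_sub P A hP hPne hA
  have hQmeas := Work.QS_meas P A
  -- the relevant translates form a countable set
  have hSN : (S ∩ (Q + X)).Countable := hS.2 _ hQXnull
  set Z := (S + X) ∩ Q with hZdef
  have hZsub : Z ⊆ ⋃ s ∈ S ∩ (Q + X), (({s} + X) ∩ Q) := by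
    rintro z ⟨⟨s, hsS, x, hxX, rfl⟩, hzQ⟩
    have hsQX : s ∈ Q + X := by
      refine ⟨s + x, hzQ, x, hxX, ?_⟩
      funext n
      show s n + x n + x n = s n
      rw [add_assoc, CharTwo.add_self_eq_zero, add_zero]
    exact Set.mem_biUnion ⟨hsS, hsQX⟩
      ⟨Set.add_mem_add (Set.mem_singleton s) hxX, hzQ⟩
  have hZnull : ν Z = 0 := by
    have h0 : ν (⋃ s ∈ S ∩ (Q + X), (({s} + X) ∩ Q)) = 0 :=
      (measure_biUnion_null_iff hSN).mpr fun s _ =>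
        Work.translate_null hX hQperf hQne hνcanon s
    exact le_antisymm (le_trans (measure_mono hZsub) (le_of_eq h0)) zero_le
  haveI := hνcanon.1
  haveI : MeasureTheory.NullSingletonClass ν := ⟨Work.νQ_noAtoms P A hμ hP hPne hA⟩
  obtain ⟨Wm, hZW, hWmeas, hW0⟩ := exists_measurable_superset_of_null hZnull
  set B := Q \ Wm with hBdef
  have hBmeas : MeasurableSet B := hQmeas.diff hWmeas
  have hB1 : ν B ≠ 0 := by
    intro h0
    have hle : ν Q ≤ ν B + ν Wm := by
      refine le_trans (measure_mono ?_) (measure_union_le _ _)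
      intro x hx
      by_cases hxw : x ∈ Wm
      · exact Set.mem_union_right _ hxw
      · exact Set.mem_union_left _ ⟨hx, hxw⟩
    rw [hνcanon.2.1, h0, hW0, add_zero] at hle
    exact absurd hle (by norm_num)
  obtain ⟨K, hKB, hKclosed, hKlt⟩ :=
    hBmeas.exists_isClosed_lt_add (measure_ne_top ν B) hB1
  have hK0 : ν K ≠ 0 := by
    intro h
    rw [h, zero_add] at hKlt
    exact absurd hKlt (lt_irrefl _)
  have hKunc : ¬ K.Countable := fun hc => hK0 (hc.measure_zero ν)
  obtain ⟨V, D, hVc, hDperf, hKVD⟩ := exists_countable_union_perfect_of_isClosed hKclosed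
  have hDne : D.Nonempty := by
    rcases D.eq_empty_or_nonempty with hD | hD
    · exact absurd (by rw [hKVD, hD, Set.union_empty]; exact hVc) hKunc
    · exact hD
  have hDK : D ⊆ K := by
    rw [hKVD]
    exact Set.subset_union_right
  refine ⟨D, ⟨hDperf, hDne⟩, ?_, ?_⟩
  · exact fun x hx => hQsubP (hKB (hDK hx)).1
  · apply Set.eq_empty_iff_forall_notMem.mpr
    rintro z ⟨hzD, hzSX⟩
    have hzB : z ∈ B := hKB (hDK hzD)
    exact hzB.2 (hZW ⟨hzSX, hzB.1⟩)
end

section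
/- If X, Y ⊆ 2^ω are both S-null for every Silver perfect set S, then h[X × Y] is S-null for every Silver perfect set S (i.e., the class vPN is closed under taking products). -/
open MeasureTheory Set Pointwise

namespace Aux13

noncomputable def g (f : ℕ → Option (ZMod 2)) (i : ℕ) (b : ZMod 2) : ENNReal :=
  if f i = none then 2⁻¹ else if f i = some b then 1 else 0

def Sil (f : ℕ → Option (ZMod 2)) : Set CS := {x | ∀ n b, f n = some b → x n = b}

def Con (F : Finset ℕ) (σ : ℕ → ZMod 2) : Set CS := {z | ∀ i ∈ F, z i = σ i}

lemma zmod2_cases (b : ZMod 2) : b = 0 ∨ b = 1 := by revert b; decide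

lemma mSet_coord (i : ℕ) (c : ZMod 2) : MeasurableSet {z : CS | z i = c} := by
  have h : {z : CS | z i = c} = (fun z : CS => z i) ⁻¹' {c} := rfl
  rw [h]; exact (measurable_pi_apply i) (measurableSet_singleton c)

lemma mSet_Sil (f : ℕ → Option (ZMod 2)) : MeasurableSet (Sil f) := by
  have h : Sil f = ⋂ (n : ℕ) (b : ZMod 2), {x : CS | f n = some b → x n = b} := by
    ext x; simp [Sil]
  rw [h]
  refine MeasurableSet.iInter fun n => MeasurableSet.iInter fun b => ?_
  by_cases hf : f n = some b
  · have h2 : {x : CS | f n = some b → x n = b} = {x : CS | x n = b} := by ext x; simp [hf]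
    rw [h2]; exact mSet_coord n b
  · have h2 : {x : CS | f n = some b → x n = b} = univ := by ext x; simp [hf]
    rw [h2]; exact MeasurableSet.univ

lemma mSet_cyl (w : List (ZMod 2)) : MeasurableSet (cyl w) := by
  have h : cyl w = ⋂ (i : ℕ) (_ : i < w.length), {x : CS | x i = w.getD i 0} := by
    ext x; simp [cyl]
  rw [h]
  exact MeasurableSet.iInter fun i => MeasurableSet.iInter fun _ => mSet_coord _ _

lemma mSet_Con (F : Finset ℕ) (σ : ℕ → ZMod 2) : MeasurableSet (Con F σ) := by
  have h : Con F σ = ⋂ (i : ℕ) (_ : i ∈ F), {z : CS | z i = σ i} := by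
    ext z; simp [Con]
  rw [h]
  exact MeasurableSet.iInter fun i => MeasurableSet.iInter fun _ => mSet_coord _ _

lemma getD_append_lt (l : List (ZMod 2)) (b : ZMod 2) (i : ℕ) (h : i < l.length) :
    (l ++ [b]).getD i 0 = l.getD i 0 := by
  rw [List.getD_eq_getElem _ _ (by simp; omega), List.getD_eq_getElem _ _ h]
  exact List.getElem_append_left h

lemma getD_append_len (l : List (ZMod 2)) (b : ZMod 2) :
    (l ++ [b]).getD l.length 0 = b := by
  rw [List.getD_eq_getElem _ _ (by simp)]
  simp

lemma getD_ofFn {m : ℕ} (τ : Fin m → ZMod 2) (i : ℕ) (h : i < m) :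
    (List.ofFn τ).getD i 0 = τ ⟨i, h⟩ := by
  rw [List.getD_eq_getElem _ _ (by simp [h])]
  simp

lemma cyl_append_subset (w : List (ZMod 2)) (b : ZMod 2) : cyl (w ++ [b]) ⊆ cyl w := by
  intro x hx i hi
  have := hx i (by simp; omega)
  rwa [getD_append_lt _ _ _ hi] at this

lemma nu_compl {f : ℕ → Option (ZMod 2)} {ν : Measure CS}
    (hν : IsCanonical (Sil f) ν) : ν (Sil f)ᶜ = 0 := by
  haveI := hν.1
  rw [prob_compl_eq_zero_iff (mSet_Sil f)]
  exact hν.2.1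

lemma nu_null_of_disj {f : ℕ → Option (ZMod 2)} {ν : Measure CS}
    (hν : IsCanonical (Sil f) ν) {A : Set CS} (h : A ⊆ (Sil f)ᶜ) : ν A = 0 :=
  measure_mono_null h (nu_compl hν)

lemma nonempty_branch {f : ℕ → Option (ZMod 2)} {w : List (ZMod 2)}
    (hm : f w.length = none) (h : (cyl w ∩ Sil f).Nonempty) : Branch (Sil f) w := by
  obtain ⟨x, hxc, hxS⟩ := h
  have key : ∀ b : ZMod 2, (cyl (w ++ [b]) ∩ Sil f).Nonempty := by
    intro b
    refine ⟨Function.update x w.length b, ?_, ?_⟩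
    · intro i hi
      rcases Nat.lt_or_ge i w.length with h1 | h1
      · rw [Function.update_of_ne (by omega), getD_append_lt _ _ _ h1]
        exact hxc i h1
      · have hieq : i = w.length := by simp at hi; omega
        subst hieq
        rw [Function.update_self, getD_append_len]
    · intro n c hfn
      have hne : n ≠ w.length := fun he => by rw [he, hm] at hfn; cases hfn
      rw [Function.update_of_ne hne]
      exact hxS n c hfn
  exact ⟨key 0, key 1⟩

lemma cyl_two_eq {f : ℕ → Option (ZMod 2)} {ν : Measure CS}
    (hν : IsCanonical (Sil f) ν) {m : ℕ} (hm : f m = none) (w : List (ZMod 2))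
    (hw : w.length = m) : ν (cyl (w ++ [0])) = ν (cyl (w ++ [1])) := by
  by_cases hne : (cyl w ∩ Sil f).Nonempty
  · exact hν.2.2 w (nonempty_branch (by rwa [hw]) hne)
  · have hsub : cyl w ⊆ (Sil f)ᶜ := by
      intro x hx hxS
      exact hne ⟨x, hx, hxS⟩
    have h0 : ν (cyl w) = 0 := nu_null_of_disj hν hsub
    have e0 : ν (cyl (w ++ [0])) = 0 :=
      le_antisymm (le_trans (measure_mono (cyl_append_subset w 0)) h0.le) zero_le
    have e1 : ν (cyl (w ++ [1])) = 0 :=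
      le_antisymm (le_trans (measure_mono (cyl_append_subset w 1)) h0.le) zero_le
    rw [e0, e1]

lemma mem_cyl_ofFn_append {m : ℕ} (τ : Fin m → ZMod 2) (b : ZMod 2) (z : CS) :
    z ∈ cyl (List.ofFn τ ++ [b]) ↔ (∀ i : Fin m, z i = τ i) ∧ z m = b := by
  have hlen : (List.ofFn τ).length = m := List.length_ofFn
  constructor
  · intro h
    constructor
    · intro i
      have := h i (by simp)
      rwa [getD_append_lt _ _ _ (by rw [hlen]; exact i.isLt), getD_ofFn τ i i.isLt] at this
    · have hg : (List.ofFn τ ++ [b]).getD (List.ofFn τ).length 0 = b := getD_append_len _ b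
      rw [hlen] at hg
      have := h m (by simp)
      rwa [hg] at this
  · rintro ⟨h1, h2⟩ i hi
    rcases Nat.lt_or_ge i m with hlt | hge
    · rw [getD_append_lt _ _ _ (by rw [hlen]; exact hlt), getD_ofFn τ i hlt]
      exact h1 ⟨i, hlt⟩
    · have hieq : i = m := by simp [hlen] at hi; omega
      subst hieq
      have hg : (List.ofFn τ ++ [b]).getD (List.ofFn τ).length 0 = b := getD_append_len _ b
      rw [hlen] at hg
      rw [hg]
      exact h2

lemma half {f : ℕ → Option (ZMod 2)} {ν : Measure CS}
    (hν : IsCanonical (Sil f) ν) {m : ℕ} (hm : f m = none) (F : Finset ℕ)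
    (hF : ∀ i ∈ F, i < m) (σ : ℕ → ZMod 2) :
    ν (Con F σ ∩ {z | z m = 0}) = ν (Con F σ ∩ {z | z m = 1}) := by
  classical
  set T : Finset (Fin m → ZMod 2) :=
    Finset.univ.filter (fun τ => ∀ i : Fin m, (i : ℕ) ∈ F → τ i = σ i) with hT
  have hdec : ∀ b : ZMod 2,
      Con F σ ∩ {z | z m = b} = ⋃ τ ∈ T, cyl (List.ofFn τ ++ [b]) := by
    intro b
    ext z
    simp only [mem_inter_iff, mem_setOf_eq, mem_iUnion, exists_prop,
      mem_cyl_ofFn_append, hT, Finset.mem_filter, Finset.mem_univ, true_and]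
    constructor
    · rintro ⟨hzc, hzb⟩
      exact ⟨fun i => z i, fun i hi => hzc i hi, fun i => rfl, hzb⟩
    · rintro ⟨τ, hτ, h1, h2⟩
      refine ⟨fun i hi => ?_, h2⟩
      have him : i < m := hF i hi
      rw [h1 ⟨i, him⟩]
      exact hτ ⟨i, him⟩ hi
  have hdisj : ∀ b : ZMod 2, (T : Set (Fin m → ZMod 2)).PairwiseDisjoint
      (fun τ => cyl (List.ofFn τ ++ [b])) := by
    intro b τ _ τ' _ hne
    refine Set.disjoint_left.mpr fun z hz hz' => hne ?_
    have h1 := (mem_cyl_ofFn_append τ b z).mp hz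
    have h2 := (mem_cyl_ofFn_append τ' b z).mp hz'
    funext i
    rw [← h1.1 i, ← h2.1 i]
  rw [hdec 0, hdec 1,
    measure_biUnion_finset (hdisj 0) (fun τ _ => mSet_cyl _),
    measure_biUnion_finset (hdisj 1) (fun τ _ => mSet_cyl _)]
  exact Finset.sum_congr rfl fun τ _ =>
    cyl_two_eq hν hm (List.ofFn τ) List.length_ofFn

lemma con_eq {f : ℕ → Option (ZMod 2)} {ν : Measure CS}
    (hν : IsCanonical (Sil f) ν) :
    ∀ m (F : Finset ℕ), (∀ i ∈ F, i < m) → ∀ σ : ℕ → ZMod 2,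
      ν (Con F σ) = ∏ i ∈ F, g f i (σ i) := by
  haveI := hν.1
  intro m
  induction m with
  | zero =>
    intro F hF σ
    have hFe : F = ∅ := Finset.eq_empty_of_forall_notMem fun i hi => by
      have := hF i hi; omega
    subst hFe
    have : Con ∅ σ = univ := by ext z; simp [Con]
    rw [this, Finset.prod_empty, measure_univ]
  | succ m ih =>
    intro F hF σ
    by_cases hm : m ∈ F
    · set F' := F.erase m with hF'def
      have hF' : ∀ i ∈ F', i < m := by
        intro i hi
        have h1 := Finset.mem_erase.mp hi
        have := hF i h1.2
        omega
      have hsplit : Con F σ = Con F' σ ∩ {z | z m = σ m} := by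
        ext z
        simp only [Con, mem_setOf_eq, mem_inter_iff, hF'def, Finset.mem_erase]
        constructor
        · intro h
          exact ⟨fun i hi => h i hi.2, h m hm⟩
        · rintro ⟨h1, h2⟩ i hi
          by_cases hie : i = m
          · rw [hie]; exact h2
          · exact h1 i ⟨hie, hi⟩
      have hA := ih F' hF' σ
      have hprod : ∏ i ∈ F, g f i (σ i) = (∏ i ∈ F', g f i (σ i)) * g f m (σ m) :=
        (Finset.prod_erase_mul F _ hm).symm
      rcases hfm : f m with _ | c
      · -- f m = none
        have key := half hν hfm F' hF' σ
        have hcup : Con F' σ ∩ {z | z m = 0} ∪ Con F' σ ∩ {z | z m = 1} = Con F' σ := by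
          rw [← inter_union_distrib_left]
          have : {z : CS | z m = 0} ∪ {z : CS | z m = 1} = univ := by
            ext z; simp [zmod2_cases (z m)]
          rw [this, inter_univ]
        have hd : Disjoint (Con F' σ ∩ {z | z m = 0}) (Con F' σ ∩ {z | z m = 1}) := by
          refine Set.disjoint_left.mpr fun z hz hz' => ?_
          have h1 : z m = 0 := hz.2
          have h2 : z m = 1 := hz'.2
          rw [h1] at h2
          exact absurd h2 (by decide)
        have hsum : ν (Con F' σ ∩ {z | z m = 0}) + ν (Con F' σ ∩ {z | z m = 1})
            = ν (Con F' σ) := by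
          rw [← measure_union hd ((mSet_Con F' σ).inter (mSet_coord m 1)), hcup]
        have h2a : ν (Con F' σ ∩ {z | z m = 0}) + ν (Con F' σ ∩ {z | z m = 0})
            = ν (Con F' σ) := by
          nth_rewrite 2 [key]
          exact hsum
        have hval : ν (Con F σ) = ν (Con F' σ ∩ {z | z m = 0}) := by
          rw [hsplit]
          rcases zmod2_cases (σ m) with h | h
          · rw [h]
          · rw [h]
            exact key.symm
        have hg : g f m (σ m) = 2⁻¹ := by simp [g, hfm]
        rw [hval, hprod, ← hA, hg, ← h2a]
        generalize ν (Con F' σ ∩ {z | z m = 0}) = a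
        have hrw : (a + a) * 2⁻¹ = a * (2 * 2⁻¹) := by ring
        rw [hrw, ENNReal.mul_inv_cancel (by norm_num) (by norm_num), mul_one]
      · -- f m = some c
        by_cases hσ : σ m = c
        · have hg : g f m (σ m) = 1 := by simp [g, hfm, hσ]
          rw [hprod, hg, mul_one, ← hA]
          refine le_antisymm (measure_mono (by rw [hsplit]; exact inter_subset_left)) ?_
          have hsub : Con F' σ ⊆ Con F σ ∪ {z | z m ≠ c} := by
            intro z hz
            by_cases hzm : z m = c
            · left
              rw [hsplit]
              exact ⟨hz, by rw [hσ]; exact hzm⟩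
            · right; exact hzm
          have hnull : ν {z : CS | z m ≠ c} = 0 := by
            refine nu_null_of_disj hν fun z hz hzS => hz (hzS m c hfm)
          calc ν (Con F' σ) ≤ ν (Con F σ ∪ {z | z m ≠ c}) := measure_mono hsub
            _ ≤ ν (Con F σ) + ν {z : CS | z m ≠ c} := measure_union_le _ _
            _ = ν (Con F σ) := by rw [hnull, add_zero]
        · have hg : g f m (σ m) = 0 := by
            simp only [g, hfm]
            rw [if_neg (by simp), if_neg (by simp; exact fun he => hσ he.symm)]
          rw [hprod, hg, mul_zero]
          refine nu_null_of_disj hν fun z hz hzS => ?_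
          have h1 : z m = σ m := hz m hm
          have h2 : z m = c := hzS m c hfm
          rw [h1] at h2
          exact hσ h2
    · refine ih F (fun i hi => ?_) σ
      have hlt := hF i hi
      have hne : i ≠ m := fun he => hm (he ▸ hi)
      omega

/-! ### the stretched map -/

def ev (r : ℕ → ℕ) : CS → CS := fun z n => z (r n)

lemma measurable_ev (r : ℕ → ℕ) : Measurable (ev r) :=
  measurable_pi_lambda _ fun n => measurable_pi_apply (r n)

lemma map_cyl {f : ℕ → Option (ZMod 2)} {ν : Measure CS}
    (hν : IsCanonical (Sil f) ν) {r : ℕ → ℕ} (hr : StrictMono r) (u : List (ZMod 2)) :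
    (ν.map (ev r)) (cyl u) = ∏ i ∈ Finset.range u.length, g f (r i) (u.getD i 0) := by
  rw [Measure.map_apply (measurable_ev r) (mSet_cyl u)]
  set σ : ℕ → ZMod 2 := Function.extend r (fun i => u.getD i 0) (fun _ => 0) with hσ
  have hσr : ∀ i : ℕ, σ (r i) = u.getD i 0 := fun i => hr.injective.extend_apply _ _ i
  have hpre : ev r ⁻¹' cyl u = Con ((Finset.range u.length).image r) σ := by
    ext z
    simp only [mem_preimage, cyl, mem_setOf_eq, Con, Finset.mem_image, Finset.mem_range]
    constructor
    · rintro h j ⟨i, hi, rfl⟩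
      rw [hσr i]
      exact h i hi
    · intro h i hi
      have := h (r i) ⟨i, hi, rfl⟩
      rwa [hσr i] at this
  rw [hpre, con_eq hν (r u.length) _ (by
    intro j hj
    obtain ⟨i, hi, rfl⟩ := Finset.mem_image.mp hj
    exact hr (Finset.mem_range.mp hi)) σ]
  rw [Finset.prod_image (fun i _ j _ h => hr.injective h)]
  exact Finset.prod_congr rfl fun i _ => by rw [hσr i]

lemma canonical_map {f : ℕ → Option (ZMod 2)} {ν : Measure CS}
    (hν : IsCanonical (Sil f) ν) {r : ℕ → ℕ} (hr : StrictMono r) :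
    IsCanonical (Sil (f ∘ r)) (ν.map (ev r)) := by
  haveI := hν.1
  refine ⟨Measure.isProbabilityMeasure_map (measurable_ev r).aemeasurable, ?_, ?_⟩
  · rw [Measure.map_apply (measurable_ev r) (mSet_Sil (f ∘ r))]
    refine le_antisymm prob_le_one ?_
    have hsub : Sil f ⊆ ev r ⁻¹' Sil (f ∘ r) := by
      intro x hx n b hb
      exact hx (r n) b hb
    calc (1 : ENNReal) = ν (Sil f) := hν.2.1.symm
      _ ≤ ν (ev r ⁻¹' Sil (f ∘ r)) := measure_mono hsub
  · intro w hbr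
    have hnone : f (r w.length) = none := by
      by_contra h
      obtain ⟨c, hc⟩ := Option.ne_none_iff_exists'.mp h
      have hb : (cyl (w ++ [c + 1]) ∩ Sil (f ∘ r)).Nonempty := by
        rcases zmod2_cases (c + 1) with h1 | h1 <;> rw [h1]
        · exact hbr.1
        · exact hbr.2
      obtain ⟨x, hx1, hx2⟩ := hb
      have e1 : x w.length = c + 1 := by
        have := hx1 w.length (by simp)
        rwa [getD_append_len] at this
      have e2 : x w.length = c := hx2 w.length c hc
      rw [e2] at e1
      have h10 : (1 : ZMod 2) = 0 := by
        have h' := e1.symm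
        rwa [add_eq_left] at h'
      exact one_ne_zero h10
    rw [map_cyl hν hr (w ++ [0]), map_cyl hν hr (w ++ [1])]
    simp only [List.length_append, List.length_singleton]
    rw [Finset.prod_range_succ, Finset.prod_range_succ]
    congr 1
    · exact Finset.prod_congr rfl fun i hi => by
        rw [getD_append_lt _ _ _ (Finset.mem_range.mp hi),
          getD_append_lt _ _ _ (Finset.mem_range.mp hi)]
    · rw [getD_append_len, getD_append_len]
      simp [g, hnone]

end Aux13

/-- If `X, Y` are `S`-null for every Silver perfect `S`, then so is
`h[X × Y]` (the class `vPN` is closed under products). -/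
theorem stmt_13 (X Y : Set CS) (hX : ∀ S, SilverPerf S → PNull S X)
    (hY : ∀ S, SilverPerf S → PNull S Y) :
    ∀ S, SilverPerf S → PNull S (interleave '' (X ×ˢ Y)) := by
  rintro S ⟨f, hinf, rfl⟩ ν hν
  have hνc : IsCanonical (Aux13.Sil f) ν := hν
  show ν (interleave '' (X ×ˢ Y) ∩ Aux13.Sil f) = 0
  have hcase : {n | f (2 * n) = none}.Infinite ∨ {n | f (2 * n + 1) = none}.Infinite := by
    by_contra hcon
    push_neg at hcon
    have hsub : {n | f n = none} ⊆
        (fun n => 2 * n) '' {n | f (2 * n) = none} ∪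
          (fun n => 2 * n + 1) '' {n | f (2 * n + 1) = none} := by
      intro n hn
      rcases Nat.even_or_odd n with ⟨k, hk⟩ | ⟨k, hk⟩
      · left
        refine ⟨k, ?_, ?_⟩
        · show f (2 * k) = none
          rw [show 2 * k = n by omega]; exact hn
        · show 2 * k = n
          omega
      · right
        refine ⟨k, ?_, ?_⟩
        · show f (2 * k + 1) = none
          rw [show 2 * k + 1 = n by omega]; exact hn
        · show 2 * k + 1 = n
          omega
    exact hinf (((hcon.1.image _).union (hcon.2.image _)).subset hsub)
  rcases hcase with hc | hc
  · have hr : StrictMono (fun n => 2 * n) := fun a b h => by simp; omega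
    have hSr : SilverPerf (Aux13.Sil (f ∘ fun n => 2 * n)) := ⟨f ∘ fun n => 2 * n, hc, rfl⟩
    have h0 := hX _ hSr _ (Aux13.canonical_map hνc hr)
    have hsub : interleave '' (X ×ˢ Y) ∩ Aux13.Sil f ⊆
        Aux13.ev (fun n => 2 * n) ⁻¹' (X ∩ Aux13.Sil (f ∘ fun n => 2 * n)) := by
      rintro z ⟨⟨⟨x, y⟩, hxy, rfl⟩, hzS⟩
      have hev : Aux13.ev (fun n => 2 * n) (interleave (x, y)) = x := by
        funext n
        show interleave (x, y) (2 * n) = x n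
        simp only [interleave]
        rw [if_pos (by omega : 2 * n % 2 = 0)]
        congr 1
        omega
      rw [Set.mem_preimage]
      exact ⟨by rw [hev]; exact hxy.1, fun n b hb => hzS (2 * n) b hb⟩
    refine le_antisymm ?_ zero_le
    calc ν (interleave '' (X ×ˢ Y) ∩ Aux13.Sil f)
        ≤ ν (Aux13.ev (fun n => 2 * n) ⁻¹' (X ∩ Aux13.Sil (f ∘ fun n => 2 * n))) :=
          measure_mono hsub
      _ ≤ (ν.map (Aux13.ev (fun n => 2 * n))) (X ∩ Aux13.Sil (f ∘ fun n => 2 * n)) :=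
          Measure.le_map_apply (Aux13.measurable_ev _).aemeasurable _
      _ = 0 := h0
  · have hr : StrictMono (fun n => 2 * n + 1) := fun a b h => by simp; omega
    have hSr : SilverPerf (Aux13.Sil (f ∘ fun n => 2 * n + 1)) :=
      ⟨f ∘ fun n => 2 * n + 1, hc, rfl⟩
    have h0 := hY _ hSr _ (Aux13.canonical_map hνc hr)
    have hsub : interleave '' (X ×ˢ Y) ∩ Aux13.Sil f ⊆
        Aux13.ev (fun n => 2 * n + 1) ⁻¹' (Y ∩ Aux13.Sil (f ∘ fun n => 2 * n + 1)) := by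
      rintro z ⟨⟨⟨x, y⟩, hxy, rfl⟩, hzS⟩
      have hev : Aux13.ev (fun n => 2 * n + 1) (interleave (x, y)) = y := by
        funext n
        show interleave (x, y) (2 * n + 1) = y n
        simp only [interleave]
        rw [if_neg (by omega : ¬ (2 * n + 1) % 2 = 0)]
        congr 1
        omega
      rw [Set.mem_preimage]
      exact ⟨by rw [hev]; exact hxy.2, fun n b hb => hzS (2 * n + 1) b hb⟩
    refine le_antisymm ?_ zero_le
    calc ν (interleave '' (X ×ˢ Y) ∩ Aux13.Sil f)
        ≤ ν (Aux13.ev (fun n => 2 * n + 1) ⁻¹' (Y ∩ Aux13.Sil (f ∘ fun n => 2 * n + 1))) :=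
          measure_mono hsub
      _ ≤ (ν.map (Aux13.ev (fun n => 2 * n + 1))) (Y ∩ Aux13.Sil (f ∘ fun n => 2 * n + 1)) :=
          Measure.le_map_apply (Aux13.measurable_ev _).aemeasurable _
      _ = 0 := h0
end

section
/- If there exists a universally null subset of 2^ω of cardinality 2^{ℵ₀}, then there exists a universally null set Y ⊆ 2^ω that is not in bPN′; in particular, Y is not perfectly null in the transitive sense. That is, there is a universally null Y and a balanced perfect set D such that for every G_δ set G ⊇ Y there exists t ∈ 2^ω with μ_D((G + t) ∩ D) > 0. -/
open MeasureTheory Set Pointwise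

namespace S16


lemma z2cases (a : ZMod 2) : a = 0 ∨ a = 1 := by revert a; decide

lemma z2add (a b : ZMod 2) : a + b + b = a := by revert a b; decide

lemma cyl_nil : cyl [] = univ := by ext x; simp [cyl]

lemma mem_cyl_append {x : CS} {w : List (ZMod 2)} {b : ZMod 2} :
    x ∈ cyl (w ++ [b]) ↔ x ∈ cyl w ∧ x w.length = b := by
  constructor
  · intro h
    refine ⟨fun i hi => ?_, ?_⟩
    · rw [h i (by simp; omega), List.getD_append _ _ _ _ hi]
    · have := h w.length (by simp)
      rwa [List.getD_append_right _ _ _ _ le_rfl, Nat.sub_self] at this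
  · rintro ⟨h1, h2⟩ i hi
    simp only [List.length_append, List.length_singleton] at hi
    rcases lt_or_eq_of_le (Nat.lt_succ_iff.1 hi) with h | h
    · rw [List.getD_append _ _ _ _ h]; exact h1 i h
    · subst h; rw [List.getD_append_right _ _ _ _ le_rfl, Nat.sub_self]; exact h2

lemma measurableSet_cyl (w : List (ZMod 2)) : MeasurableSet (cyl w) := by
  have : cyl w = ⋂ i ∈ Finset.range w.length, (fun x : CS => x i) ⁻¹' {w.getD i 0} := by
    ext x; simp [cyl]
  rw [this]
  exact MeasurableSet.biInter (Finset.range w.length).countable_toSet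
    (fun i _ => (measurable_pi_apply i) (measurableSet_singleton _))

lemma cyl_eq_union (w : List (ZMod 2)) :
    cyl w = cyl (w ++ [0]) ∪ cyl (w ++ [1]) := by
  ext x
  constructor
  · intro h
    rcases z2cases (x w.length) with h0 | h1
    · exact Or.inl (mem_cyl_append.2 ⟨h, h0⟩)
    · exact Or.inr (mem_cyl_append.2 ⟨h, h1⟩)
  · rintro (h | h) <;> exact (mem_cyl_append.1 h).1

lemma cyl_disj (w : List (ZMod 2)) : Disjoint (cyl (w ++ [0])) (cyl (w ++ [1])) := by
  rw [Set.disjoint_left]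
  intro x h0 h1
  have := (mem_cyl_append.1 h0).2
  have := (mem_cyl_append.1 h1).2
  simp_all




lemma coord_eq_iUnion (n : ℕ) (b : ZMod 2) :
    {x : CS | x n = b} = ⋃ w : {w : List (ZMod 2) // w.length = n}, cyl (w.1 ++ [b]) := by
  ext x
  simp only [mem_setOf_eq, mem_iUnion]
  constructor
  · intro h
    refine ⟨⟨List.ofFn (fun i : Fin n => x i), by simp⟩, ?_⟩
    intro i hi
    simp only [List.length_append, List.length_ofFn, List.length_singleton] at hi
    rcases lt_or_eq_of_le (Nat.lt_succ_iff.1 hi) with h' | h'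
    · rw [List.getD_append _ _ _ _ (by simpa using h'), List.getD_eq_getElem _ _ (by simpa using h')]
      simp
    · subst h'
      rw [List.getD_append_right _ _ _ _ (by simp), List.length_ofFn, Nat.sub_self]
      simpa using h
  · rintro ⟨⟨w, hw⟩, h⟩
    have := h n (by simp [hw])
    rwa [List.getD_append_right _ _ _ _ (by simp [hw]), hw, Nat.sub_self] at this

lemma measurableSpace_eq :
    (inferInstance : MeasurableSpace CS) = MeasurableSpace.generateFrom (Set.range cyl) := by
  apply le_antisymm
  · show MeasurableSpace.pi ≤ _
    refine iSup_le fun n => ?_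
    intro s hs
    obtain ⟨s', -, rfl⟩ := hs
    have h1 : ∀ b : ZMod 2,
        MeasurableSet[MeasurableSpace.generateFrom (Set.range cyl)] {x : CS | x n = b} := by
      intro b
      rw [coord_eq_iUnion n b]
      exact MeasurableSet.iUnion fun w => MeasurableSpace.measurableSet_generateFrom ⟨_, rfl⟩
    have h2 : (fun x : CS => x n) ⁻¹' s' = ⋃ b ∈ s', {x : CS | x n = b} := by
      ext x; simp
    rw [h2]
    exact MeasurableSet.biUnion s'.to_countable fun b _ => h1 b
  · refine MeasurableSpace.generateFrom_le ?_
    rintro _ ⟨w, rfl⟩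
    have : cyl w = ⋂ i ∈ Finset.range w.length, (fun x : CS => x i) ⁻¹' {w.getD i 0} := by
      ext x; simp [cyl]
    rw [this]
    exact MeasurableSet.biInter (Finset.range w.length).countable_toSet
      (fun i _ => (measurable_pi_apply i) (measurableSet_singleton _))

lemma piSystem_cyl : IsPiSystem (Set.range cyl) := by
  rintro _ ⟨w, rfl⟩ _ ⟨v, rfl⟩ ⟨x₀, hw, hv⟩
  rcases le_total w.length v.length with h | h
  · refine ⟨v, ?_⟩
    rw [Set.inter_eq_right.2 ?_]
    intro y hy i hi
    rw [hy i (lt_of_lt_of_le hi h), ← hv i (lt_of_lt_of_le hi h), hw i hi]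
  · refine ⟨w, ?_⟩
    rw [Set.inter_eq_left.2 ?_]
    intro y hy i hi
    rw [hy i (lt_of_lt_of_le hi h), ← hw i (lt_of_lt_of_le hi h), hv i hi]





def DD : Set CS := {x : CS | ∀ n, Odd n → x n = 0}

lemma measurableSet_DD : MeasurableSet DD := by
  have : DD = ⋂ n, {x : CS | Odd n → x n = 0} := by ext x; simp [DD]
  rw [this]
  refine MeasurableSet.iInter fun n => ?_
  by_cases h : Odd n
  · have : {x : CS | Odd n → x n = 0} = (fun x : CS => x n) ⁻¹' {0} := by ext x; simp [h]
    rw [this]; exact (measurable_pi_apply n) (measurableSet_singleton _)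
  · have : {x : CS | Odd n → x n = 0} = univ := by ext x; simp [h]
    rw [this]; exact MeasurableSet.univ

lemma branch_iff (w : List (ZMod 2)) :
    Branch DD w ↔ (∀ i < w.length, Odd i → w.getD i 0 = 0) ∧ Even w.length := by
  constructor
  · rintro ⟨⟨x0, hx0c, hx0D⟩, ⟨x1, hx1c, hx1D⟩⟩
    constructor
    · intro i hi hodd
      rw [← (mem_cyl_append.1 hx0c).1 i hi]
      exact hx0D i hodd
    · by_contra h
      have h1 : x1 w.length = 1 := (mem_cyl_append.1 hx1c).2
      have h2 : x1 w.length = 0 := hx1D _ (Nat.not_even_iff_odd.1 h)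
      simp [h2] at h1
  · rintro ⟨hodd, heven⟩
    have key : ∀ b : ZMod 2, (cyl (w ++ [b]) ∩ DD).Nonempty := by
      intro b
      refine ⟨fun i => if Odd i then 0 else (w ++ [b]).getD i 0, ?_, ?_⟩
      · intro i hi
        by_cases h : Odd i
        · simp only [h, if_true]
          simp only [List.length_append, List.length_singleton] at hi
          rcases lt_or_eq_of_le (Nat.lt_succ_iff.1 hi) with h' | h'
          · rw [List.getD_append _ _ _ _ h']; exact (hodd i h' h).symm
          · exfalso; rw [h'] at h; exact (Nat.not_even_iff_odd.2 h) heven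
        · simp [h]
      · intro n hn; simp [hn]
    exact ⟨key 0, key 1⟩

lemma perf_DD : PerfSet DD := by
  constructor
  · constructor
    · have : DD = ⋂ n, {x : CS | Odd n → x n = 0} := by ext x; simp [DD]
      rw [this]
      refine isClosed_iInter fun n => ?_
      by_cases h : Odd n
      · have : {x : CS | Odd n → x n = 0} = (fun x : CS => x n) ⁻¹' {0} := by ext x; simp [h]
        rw [this]; exact (isClosed_singleton).preimage (continuous_apply n)
      · have : {x : CS | Odd n → x n = 0} = univ := by ext x; simp [h]
        rw [this]; exact isClosed_univ
    · intro x hx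
      rw [accPt_iff_nhds]
      intro U hU
      set u : ℕ → CS := fun k => Function.update x (2*k) (x (2*k) + 1) with hu
      have hmem : ∀ k, u k ∈ DD := by
        intro k n hn
        have : 2*k ≠ n := by rcases hn with ⟨m, hm⟩; omega
        rw [hu]; simp only [Function.update_of_ne (Ne.symm this)]
        exact hx n hn
      have haux : ∀ a : ZMod 2, a + 1 ≠ a := by decide
      have hne : ∀ k, u k ≠ x := by
        intro k h
        have := congrFun h (2*k)
        rw [hu] at this; simp only [Function.update_self] at this
        exact haux _ this
      have htend : Filter.Tendsto u Filter.atTop (nhds x) := by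
        rw [tendsto_pi_nhds]
        intro n
        refine tendsto_const_nhds.congr' ?_
        filter_upwards [Filter.eventually_ge_atTop (n+1)] with k hk
        rw [hu]; exact (Function.update_of_ne (by omega : n ≠ 2*k) _ x).symm
      obtain ⟨k, hk⟩ := (htend.eventually_mem hU).exists
      exact ⟨u k, ⟨hk, hmem k⟩, hne k⟩
  · exact ⟨0, fun n _ => rfl⟩

lemma brCount_DD (v : List (ZMod 2)) (hv : Branch DD v) : brCount DD v = v.length / 2 := by
  obtain ⟨hcond, heven⟩ := (branch_iff v).1 hv
  obtain ⟨k, hk⟩ := heven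
  have hvlen : v.length = 2 * k := by omega
  have hset : {u : List (ZMod 2) | u <+: v ∧ u ≠ v ∧ Branch DD u} =
      ↑((Finset.range k).image (fun j => v.take (2*j))) := by
    ext u
    simp only [mem_setOf_eq, Finset.coe_image, Finset.coe_range, mem_image, mem_Iio]
    constructor
    · rintro ⟨hpre, hne, hbr⟩
      obtain ⟨hcond', heven'⟩ := (branch_iff u).1 hbr
      obtain ⟨j, hj⟩ := heven'
      have hlt : u.length < v.length := by
        rcases lt_or_eq_of_le hpre.length_le with h | h
        · exact h
        · exact absurd (hpre.eq_of_length h) hne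
      refine ⟨j, by omega, ?_⟩
      rw [List.prefix_iff_eq_take.1 hpre]
      congr 1; omega
    · rintro ⟨j, hj, rfl⟩
      have hlen : (v.take (2*j)).length = 2*j := by
        rw [List.length_take]; omega
      refine ⟨List.take_prefix _ _, ?_, ?_⟩
      · intro h
        have := congrArg List.length h
        rw [hlen] at this; omega
      · rw [branch_iff]
        refine ⟨?_, by rw [hlen]; exact ⟨j, by omega⟩⟩
        intro i hi hodd
        rw [hlen] at hi
        rw [List.getD_eq_getElem _ _ (by omega), List.getElem_take]
        rw [← List.getD_eq_getElem _ _ (by omega : i < v.length)]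
        exact hcond i (by omega) hodd
  rw [brCount, hset, Set.ncard_coe_finset, Finset.card_image_of_injOn, Finset.card_range, hvlen]
  · omega
  · intro a ha b hb hab
    simp only [Finset.coe_range, mem_Iio] at ha hb
    have := congrArg List.length hab
    rw [List.length_take, List.length_take] at this
    omega

lemma balanced_DD : BalancedPerf DD := by
  refine ⟨perf_DD, fun v w hv hw hlt => ?_⟩
  rw [brCount_DD v hv, brCount_DD w hw] at hlt
  have := ((branch_iff v).1 hv).2
  have := ((branch_iff w).1 hw).2
  obtain ⟨a, ha⟩ := ((branch_iff v).1 hv).2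
  obtain ⟨b, hb⟩ := ((branch_iff w).1 hw).2
  omega



noncomputable def lam : Measure CS := Measure.addHaarMeasure ⊤

instance : IsProbabilityMeasure lam :=
  ⟨by rw [show (univ : Set CS) = ↑(⊤ : TopologicalSpace.PositiveCompacts CS) from
        (TopologicalSpace.PositiveCompacts.coe_top).symm]
      exact Measure.addHaarMeasure_self⟩

instance : lam.IsAddLeftInvariant := by
  unfold lam; infer_instance

def E (z : CS) : CS := fun n => if n % 2 = 0 then z (n / 2) else 0

lemma measurable_E : Measurable E := by
  refine measurable_pi_lambda _ fun n => ?_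
  by_cases h : n % 2 = 0
  · simp only [E, h, if_true]; exact measurable_pi_apply _
  · simp only [E, h, if_false]; exact measurable_const

def J (t : CS) (z : CS) : CS := E z + t

lemma measurable_J (t : CS) : Measurable (J t) := by
  have h1 : Continuous (fun y : CS => y + t) := continuous_add_right t
  exact h1.measurable.comp measurable_E

noncomputable def nu0 : Measure CS := Measure.map E lam

instance : IsProbabilityMeasure nu0 := Measure.isProbabilityMeasure_map measurable_E.aemeasurable

lemma E_mem_DD (z : CS) : E z ∈ DD := by
  intro n hn
  have : n % 2 = 1 := Nat.odd_iff.1 hn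
  simp [E, this]

lemma nu0_DD : nu0 DD = 1 := by
  rw [nu0, Measure.map_apply measurable_E measurableSet_DD]
  have : E ⁻¹' DD = univ := eq_univ_of_forall fun z => E_mem_DD z
  rw [this]; exact measure_univ

open Classical in
noncomputable def val (w : List (ZMod 2)) : ENNReal :=
  if (∀ i < w.length, Odd i → w.getD i 0 = 0) then (2 : ENNReal)⁻¹ ^ ((w.length + 1) / 2) else 0

lemma cond_append (w : List (ZMod 2)) (b : ZMod 2) :
    (∀ i < (w ++ [b]).length, Odd i → (w ++ [b]).getD i 0 = 0) ↔
      ((∀ i < w.length, Odd i → w.getD i 0 = 0) ∧ (Odd w.length → b = 0)) := by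
  constructor
  · intro h
    refine ⟨fun i hi hodd => ?_, fun hodd => ?_⟩
    · rw [← List.getD_append _ [b] _ _ hi]; exact h i (by simp; omega) hodd
    · have := h w.length (by simp) hodd
      rwa [List.getD_append_right _ _ _ _ le_rfl, Nat.sub_self] at this
  · rintro ⟨h1, h2⟩ i hi hodd
    simp only [List.length_append, List.length_singleton] at hi
    rcases lt_or_eq_of_le (Nat.lt_succ_iff.1 hi) with h | h
    · rw [List.getD_append _ _ _ _ h]; exact h1 i h hodd
    · subst h; rw [List.getD_append_right _ _ _ _ le_rfl, Nat.sub_self]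
      exact h2 hodd

lemma canon_val (ν : Measure CS) (h : IsCanonical DD ν) : ∀ w, ν (cyl w) = val w := by
  obtain ⟨hprob, hD, hbr⟩ := h
  have hcompl : ν DDᶜ = 0 := by
    have := measure_compl measurableSet_DD (by exact (measure_lt_top ν DD).ne)
    rw [hD, hprob.measure_univ] at this
    simp [this]
  intro w
  induction w using List.reverseRecOn with
  | nil =>
    rw [cyl_nil, hprob.measure_univ, val]
    simp
  | append_singleton w b ih =>
    have hsum : ν (cyl w) = ν (cyl (w ++ [0])) + ν (cyl (w ++ [1])) := by
      rw [cyl_eq_union w, measure_union (cyl_disj w) (measurableSet_cyl _)]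
    by_cases hcond : ∀ i < w.length, Odd i → w.getD i 0 = 0
    · by_cases heven : Even w.length
      · -- branching case
        have hb := hbr w ((branch_iff w).2 ⟨hcond, heven⟩)
        have hvw : ν (cyl w) = val w := ih
        have ha : ν (cyl (w ++ [0])) = val w / 2 := by
          rw [ENNReal.eq_div_iff (by norm_num) (by norm_num)]
          rw [← hvw, hsum, ← hb, two_mul]
        have hval : val (w ++ [b]) = val w / 2 := by
          obtain ⟨m, hm⟩ := heven
          rw [val, val, if_pos hcond,
            if_pos ((cond_append w b).2 ⟨hcond, fun ho => absurd (Nat.odd_iff.1 ho) (by omega)⟩)]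
          · rw [List.length_append, List.length_singleton]
            have e1 : (w.length + 1 + 1) / 2 = (w.length + 1) / 2 + 1 := by omega
            rw [e1, pow_succ, ENNReal.div_eq_inv_mul, mul_comm]
        rcases z2cases b with rfl | rfl
        · rw [ha, hval]
        · rw [← hb, ha, hval]
      · -- odd length case
        have hodd : Odd w.length := Nat.not_even_iff_odd.1 heven
        have h1 : ν (cyl (w ++ [1])) = 0 := by
          refine le_antisymm ?_ (zero_le ..)
          rw [← hcompl]
          refine measure_mono fun x hx => ?_
          intro hxD
          have hx1 : x w.length = 1 := (mem_cyl_append.1 hx).2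
          have hx0 : x w.length = 0 := hxD w.length hodd
          rw [hx0] at hx1
          exact absurd hx1 (by decide)
        rcases z2cases b with rfl | rfl
        · have h0 : ν (cyl (w ++ [0])) = ν (cyl w) := by
            rw [hsum, h1, add_zero]
          rw [h0, ih, val, val, if_pos hcond,
            if_pos ((cond_append w 0).2 ⟨hcond, fun _ => rfl⟩)]
          rw [List.length_append, List.length_singleton]
          congr 1
          obtain ⟨m, hm⟩ := hodd
          omega
        · rw [h1, val, if_neg]
          intro hc
          have := ((cond_append w 1).1 hc).2 hodd
          exact absurd this (by decide)
    · -- dead branch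
      have h0 : ν (cyl w) = 0 := by rw [ih, val, if_neg hcond]
      have hle : ν (cyl (w ++ [b])) = 0 := by
        refine le_antisymm ?_ (zero_le ..)
        rw [← h0]
        exact measure_mono fun x hx => (mem_cyl_append.1 hx).1
      rw [hle, val, if_neg]
      intro hc
      exact hcond ((cond_append w b).1 hc).1



lemma nu0_canonical : IsCanonical DD nu0 := by
  refine ⟨inferInstance, nu0_DD, fun w hw => ?_⟩
  obtain ⟨hcond, heven⟩ := (branch_iff w).1 hw
  obtain ⟨k, hk⟩ := heven
  have hk' : w.length = 2 * k := by omega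
  set δ : CS := fun j => if j = k then 1 else 0 with hδ
  have key : E ⁻¹' cyl (w ++ [1]) = (fun z => δ + z) ⁻¹' (E ⁻¹' cyl (w ++ [0])) := by
    ext z
    simp only [mem_preimage]
    constructor
    · intro h i hi
      simp only [List.length_append, List.length_singleton, hk'] at hi
      have h' := fun (j : ℕ) (hj : j < 2*k+1) => h j (by simp [hk']; omega)
      by_cases hieq : i = 2*k
      · subst hieq
        have h2 := h' (2*k) (by omega)
        rw [List.getD_append_right _ _ _ _ (by omega : w.length ≤ 2*k)] at h2 ⊢
        simp only [hk', Nat.sub_self, List.getD_cons_zero] at h2 ⊢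
        have e1 : E z (2*k) = z k := by simp [E, Nat.mul_div_cancel_left, Nat.mul_mod_right]
        have e2 : E (δ + z) (2*k) = 1 + z k := by
          simp [E, Nat.mul_div_cancel_left, Nat.mul_mod_right, hδ, Pi.add_apply]
        rw [e1] at h2
        rw [e2, h2]
        decide
      · have hi2 : i < 2*k := by omega
        have h2 := h' i (by omega)
        rw [List.getD_append _ _ _ _ (by omega : i < w.length)] at h2 ⊢
        by_cases hpar : i % 2 = 0
        · have hne : i / 2 ≠ k := by omega
          have e1 : E (δ + z) i = z (i / 2) := by
            simp [E, hpar, hδ, Pi.add_apply, if_neg hne]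
          have e2 : E z i = z (i / 2) := by simp [E, hpar]
          rw [e1]; rw [e2] at h2; exact h2
        · have e1 : E (δ + z) i = 0 := by simp [E, hpar]
          have e2 : E z i = 0 := by simp [E, hpar]
          rw [e1]; rw [e2] at h2; exact h2
    · intro h i hi
      simp only [List.length_append, List.length_singleton, hk'] at hi
      have h' := fun (j : ℕ) (hj : j < 2*k+1) => h j (by simp [hk']; omega)
      by_cases hieq : i = 2*k
      · subst hieq
        have h2 := h' (2*k) (by omega)
        rw [List.getD_append_right _ _ _ _ (by omega : w.length ≤ 2*k)] at h2 ⊢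
        simp only [hk', Nat.sub_self, List.getD_cons_zero] at h2 ⊢
        have e1 : E z (2*k) = z k := by simp [E, Nat.mul_div_cancel_left, Nat.mul_mod_right]
        have e2 : E (δ + z) (2*k) = 1 + z k := by
          simp [E, Nat.mul_div_cancel_left, Nat.mul_mod_right, hδ, Pi.add_apply]
        rw [e2] at h2
        rw [e1]
        revert h2
        rcases z2cases (z k) with h0 | h0 <;> rw [h0] <;> decide
      · have hi2 : i < 2*k := by omega
        have h2 := h' i (by omega)
        rw [List.getD_append _ _ _ _ (by omega : i < w.length)] at h2 ⊢
        by_cases hpar : i % 2 = 0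
        · have hne : i / 2 ≠ k := by omega
          have e1 : E (δ + z) i = z (i / 2) := by
            simp [E, hpar, hδ, Pi.add_apply, if_neg hne]
          have e2 : E z i = z (i / 2) := by simp [E, hpar]
          rw [e2]; rw [e1] at h2; exact h2
        · have e1 : E (δ + z) i = 0 := by simp [E, hpar]
          have e2 : E z i = 0 := by simp [E, hpar]
          rw [e2]; rw [e1] at h2; exact h2
  rw [nu0, Measure.map_apply measurable_E (measurableSet_cyl _),
      Measure.map_apply measurable_E (measurableSet_cyl _), key,
      measure_preimage_add lam δ _]

lemma canon_eq (ν : Measure CS) (h : IsCanonical DD ν) : ν = nu0 := by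
  haveI : IsProbabilityMeasure ν := h.1
  refine ext_of_generate_finite (Set.range cyl) measurableSpace_eq piSystem_cyl ?_ ?_
  · rintro _ ⟨w, rfl⟩
    rw [canon_val ν h w, canon_val nu0 nu0_canonical w]
  · rw [h.1.measure_univ, measure_univ]

lemma image_add_eq_preimage (G : Set CS) (t : CS) :
    (fun g => g + t) '' G = (fun x => x + t) ⁻¹' G := by
  ext x
  constructor
  · rintro ⟨g, hg, rfl⟩
    have : g + t + t = g := funext fun n => z2add (g n) (t n)
    simpa [mem_preimage, this]
  · intro hx
    exact ⟨x + t, hx, funext fun n => z2add (x n) (t n)⟩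

lemma measurable_add_right (t : CS) : Measurable (fun x : CS => x + t) :=
  (continuous_add_right t).measurable

lemma key_bridge (G : Set CS) (hG : MeasurableSet G) (t : CS) :
    nu0 (((fun g => g + t) '' G) ∩ DD) = lam (J t ⁻¹' G) := by
  rw [image_add_eq_preimage]
  have hmeas : MeasurableSet (((fun x => x + t) ⁻¹' G) ∩ DD) :=
    ((measurable_add_right t) hG).inter measurableSet_DD
  rw [nu0, Measure.map_apply measurable_E hmeas]
  congr 1
  ext z
  simp only [mem_preimage, mem_inter_iff, J]
  exact and_iff_left (E_mem_DD z)




lemma open_eq_union_cyl {U : Set CS} (hU : IsOpen U) :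
    U = ⋃ w ∈ {w : List (ZMod 2) | cyl w ⊆ U}, cyl w := by
  apply Set.Subset.antisymm
  · intro x hx
    obtain ⟨I, u, hIu, hsub⟩ := isOpen_pi_iff.1 hU x hx
    set N := I.sup id + 1 with hN
    set w : List (ZMod 2) := List.ofFn (fun i : Fin N => x i) with hw
    have hxw : x ∈ cyl w := by
      intro i hi
      rw [hw] at hi ⊢
      simp only [List.length_ofFn] at hi
      rw [List.getD_eq_getElem _ _ (by simp only [List.length_ofFn]; omega), List.getElem_ofFn]
    have hwU : cyl w ⊆ U := by
      intro y hy
      apply hsub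
      intro a ha
      have haN : a < N := by
        have h : a ≤ I.sup id := by simpa using Finset.le_sup (f := id) ha
        omega
      have : y a = x a := by
        have h1 := hy a (by simp only [hw, List.length_ofFn]; omega)
        rw [hw, List.getD_eq_getElem _ _ (by simp only [List.length_ofFn]; omega), List.getElem_ofFn] at h1
        exact h1
      rw [this]
      exact (hIu a ha).2
    exact mem_biUnion hwU hxw
  · exact iUnion₂_subset fun w hw => hw

noncomputable def FF (f : ℕ → Set (List (ZMod 2))) : Set CS :=
  ⋂ n, ⋃ w ∈ f n, cyl w

lemma gdelta_in_range_FF {G : Set CS} (hG : IsGδ G) : ∃ f, FF f = G := by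
  obtain ⟨T, hTopen, hTc, rfl⟩ := hG
  have hT' : (insert univ T).Countable := hTc.insert _
  have hT'ne : (insert univ T).Nonempty := ⟨univ, mem_insert _ _⟩
  obtain ⟨g, hg⟩ := hT'.exists_eq_range hT'ne
  have hgopen : ∀ n, IsOpen (g n) := by
    intro n
    have : g n ∈ insert univ T := by rw [hg]; exact mem_range_self n
    rcases this with h | h
    · rw [h]; exact isOpen_univ
    · exact hTopen _ h
  refine ⟨fun n => {w | cyl w ⊆ g n}, ?_⟩
  rw [FF]
  have h1 : ⋂ n, ⋃ w ∈ {w : List (ZMod 2) | cyl w ⊆ g n}, cyl w = ⋂ n, g n := by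
    exact iInter_congr fun n => (open_eq_union_cyl (hgopen n)).symm
  rw [h1]
  rw [show ⋂ n, g n = ⋂₀ (insert univ T) by rw [hg, sInter_range]]
  rw [sInter_insert]
  simp

lemma card_gdelta_le {S : Set (Set CS)} (hS : ∀ G ∈ S, IsGδ G) :
    Cardinal.mk ↥S ≤ Cardinal.continuum := by
  have hchoice : ∀ G : ↥S, ∃ f, FF f = (G : Set CS) := fun G => gdelta_in_range_FF (hS G G.2)
  choose f hf using hchoice
  have hinj : Function.Injective f := by
    intro G1 G2 h
    have : (G1 : Set CS) = (G2 : Set CS) := by rw [← hf G1, ← hf G2, h]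
    exact Subtype.ext this
  have h1 : Cardinal.mk ↥S ≤ Cardinal.mk (ℕ → Set (List (ZMod 2))) :=
    Cardinal.mk_le_of_injective hinj
  refine h1.trans ?_
  have h2 : Cardinal.mk (ℕ → Set (List (ZMod 2))) =
      Cardinal.mk (Set (List (ZMod 2))) ^ Cardinal.mk ℕ := by
    rw [Cardinal.power_def]
  rw [h2, Cardinal.mk_set, Cardinal.mk_list_eq_aleph0, Cardinal.mk_nat,
    Cardinal.two_power_aleph0, Cardinal.continuum_power_aleph0]




/-- placing `x` on the odd coordinates -/
def OO (x : CS) : CS := fun n => if n % 2 = 1 then x (n / 2) else 0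
/-- reading off the odd coordinates -/
def qq (x : CS) : CS := fun n => x (2 * n + 1)

lemma measurable_qq : Measurable qq :=
  measurable_pi_lambda _ fun n => measurable_pi_apply _

lemma qq_J_OO (x z : CS) : qq (J (OO x) z) = x := by
  funext n
  have h1 : (2 * n + 1) % 2 = 1 := by omega
  have h2 : (2 * n + 1) / 2 = n := by omega
  simp [qq, J, E, OO, Pi.add_apply, h1, h2]


end S16

open S16 in
/-- If there is a universally null set of cardinality `2^{ℵ₀}`, then there
are a universally null `Y` and a balanced perfect `D` such that for every `G_δ` set
`G ⊇ Y` there exists `t` with `μ_D((G + t) ∩ D) > 0`; in particular `Y ∉ bPN′ ⊇ PN′`. -/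
theorem stmt_16 (h : ∃ X : Set CS, UniversallyNull X ∧ Cardinal.mk ↥X = Cardinal.continuum) :
    ∃ Y D : Set CS, UniversallyNull Y ∧ BalancedPerf D ∧
      ∀ G : Set CS, IsGδ G → Y ⊆ G → ∃ t : CS, ∀ ν : Measure CS, IsCanonical D ν →
        0 < ν (((fun g => g + t) '' G) ∩ D) := by
  classical
  obtain ⟨X, hXun, hXcard⟩ := h
  set Bad : Set (Set CS) := {G | IsGδ G ∧ ∀ s : CS, lam (J s ⁻¹' G) = 0} with hBad
  have hcard : Cardinal.mk ↥Bad ≤ Cardinal.mk ↥X := by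
    rw [hXcard]
    exact card_gdelta_le fun G hG => hG.1
  obtain ⟨ι⟩ := (Cardinal.le_def _ _).1 hcard
  have hpt : ∀ G : ↥Bad, ∃ z : CS, J (OO (ι G : CS)) z ∉ (G : Set CS) := by
    intro G
    by_contra hcon
    push_neg at hcon
    have : J (OO (ι G : CS)) ⁻¹' (G : Set CS) = univ := eq_univ_of_forall hcon
    have h0 := G.2.2 (OO (ι G : CS))
    rw [this] at h0
    rw [measure_univ] at h0
    exact one_ne_zero h0
  choose zz hzz using hpt
  set y : ↥Bad → CS := fun G => J (OO (ι G : CS)) (zz G) with hy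
  set Y : Set CS := Set.range y with hY
  have hqy : ∀ G : ↥Bad, qq (y G) = (ι G : CS) := fun G => qq_J_OO _ _
  refine ⟨Y, DD, ?_, balanced_DD, ?_⟩
  · -- universally null
    intro μ hfin hdiff
    haveI : NoAtoms μ := ⟨hdiff⟩
    set ρ : Measure CS := μ.map qq with hρ
    haveI : IsFiniteMeasure ρ := Measure.isFiniteMeasure_map μ qq
    set A : Set CS := {a | 0 < ρ {a}} with hA
    have hAc : A.Countable := by
      have := Measure.countable_meas_pos_of_disjoint_iUnion (μ := ρ)
        (As := fun a : CS => {a}) (fun a => measurableSet_singleton a)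
        (fun a b hab => by simpa [Function.onFun] using disjoint_singleton.2 hab)
      exact this
    have hAm : MeasurableSet A := hAc.measurableSet
    -- the part of Y over A is countable
    have h1 : (Y ∩ qq ⁻¹' A).Countable := by
      have hsub : Y ∩ qq ⁻¹' A ⊆ y '' {G : ↥Bad | (ι G : CS) ∈ A} := by
        rintro x ⟨⟨G, rfl⟩, hxA⟩
        exact mem_image_of_mem y (by rw [mem_setOf_eq, ← hqy G]; exact hxA)
      have hidx : {G : ↥Bad | (ι G : CS) ∈ A}.Countable := by
        have hinj : Function.Injective (fun G : ↥Bad => (ι G : CS)) := by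
          intro a b hab
          exact ι.injective (Subtype.ext hab)
        exact Set.Countable.preimage hAc hinj
      exact (hidx.image y).mono hsub
    have hμ1 : μ (Y ∩ qq ⁻¹' A) = 0 := by haveI : NullSingletonClass μ := ⟨hdiff⟩; exact h1.measure_zero μ
    -- the part over Aᶜ
    set ρ' : Measure CS := ρ.restrict Aᶜ with hρ'
    haveI : IsFiniteMeasure ρ' := inferInstance
    have hdiff' : ∀ x : CS, ρ' {x} = 0 := by
      intro x
      rw [hρ', Measure.restrict_apply' hAm.compl]
      by_cases hx : x ∈ A
      · have : ({x} : Set CS) ∩ Aᶜ = ∅ := by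
          rw [Set.singleton_inter_eq_empty]
          simpa using hx
        rw [this, measure_empty]
      · have hle : ρ ({x} ∩ Aᶜ) ≤ ρ {x} := measure_mono inter_subset_left
        have : ρ {x} = 0 := by
          by_contra hne
          exact hx (pos_iff_ne_zero.2 hne)
        exact le_antisymm (this ▸ hle) (zero_le ..)
    have hX0 : ρ' X = 0 := hXun ρ' inferInstance hdiff'
    have hX0' : ρ (X ∩ Aᶜ) = 0 := by
      rw [hρ', Measure.restrict_apply' hAm.compl] at hX0
      exact hX0
    have hμ2 : μ (qq ⁻¹' (X ∩ Aᶜ)) = 0 := by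
      refine le_antisymm ?_ (zero_le ..)
      calc μ (qq ⁻¹' (X ∩ Aᶜ)) ≤ ρ (X ∩ Aᶜ) :=
            Measure.le_map_apply measurable_qq.aemeasurable _
        _ = 0 := hX0'
    have hcover : Y ⊆ (Y ∩ qq ⁻¹' A) ∪ qq ⁻¹' (X ∩ Aᶜ) := by
      rintro x ⟨G, rfl⟩
      by_cases hx : qq (y G) ∈ A
      · exact Or.inl ⟨⟨G, rfl⟩, hx⟩
      · refine Or.inr ?_
        rw [mem_preimage, hqy G]
        exact ⟨(ι G).2, by rw [← hqy G]; exact hx⟩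
    refine le_antisymm ?_ (zero_le ..)
    calc μ Y ≤ μ ((Y ∩ qq ⁻¹' A) ∪ qq ⁻¹' (X ∩ Aᶜ)) := measure_mono hcover
      _ ≤ μ (Y ∩ qq ⁻¹' A) + μ (qq ⁻¹' (X ∩ Aᶜ)) := measure_union_le _ _
      _ = 0 := by rw [hμ1, hμ2, add_zero]
  · -- not transitively null over DD
    intro G hGδ hYG
    have hGBad : G ∉ Bad := by
      intro hmem
      exact hzz ⟨G, hmem⟩ (hYG ⟨⟨G, hmem⟩, rfl⟩)
    have : ∃ s : CS, lam (J s ⁻¹' G) ≠ 0 := by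
      by_contra hcon
      push_neg at hcon
      exact hGBad ⟨hGδ, hcon⟩
    obtain ⟨s, hs⟩ := this
    refine ⟨s, fun ν hν => ?_⟩
    rw [canon_eq ν hν, key_bridge G hGδ.measurableSet s]
    exact pos_iff_ne_zero.2 hs
end
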